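/- arXiv:math/0010030 — 2 statements merged into one kernel-verified Lean document; each statement's English description precedes it below -/
import Mathlib

section
/- The relative de Rham complex of the path algebra CQ over the vertex algebra V is acyclic: H^0_B(CQ) ≅ V = C^k and H^n_B(CQ) = 0 for all n ≥ 1, where cohomology is taken with respect to the complex Ω•_V CQ with differential d. -/
namespace Necklace

variable {k : ℕ} {A : Type}

/-- `isPath s t v l w` : the list of arrows `l` forms an oriented path from vertex `v`
to vertex `w` in the quiver with arrow set `A` and source/target maps `s`, `t`. -/
def isPath (s t : A → Fin k) : Fin k → List A → Fin k → Bool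
  | v, [], w => v = w
  | v, a :: l, w => s a = v && isPath s t (t a) l w

/-- An oriented path in the quiver. -/
structure PathIn (s t : A → Fin k) where
  src : Fin k
  tgt : Fin k
  arrows : List A
  is_path : isPath s t src arrows tgt = true

variable {s t : A → Fin k}

theorem isPath_append : ∀ {l l' : List A} {v w u : Fin k},
    isPath s t v l w = true → isPath s t w l' u = true →
      isPath s t v (l ++ l') u = true := by
  intro l
  induction l with
  | nil =>
    intro l' v w u h h'
    simp [isPath] at h
    subst h
    simpa using h'
  | cons a l ih =>
    intro l' v w u h h'
    simp only [isPath, List.cons_append, Bool.and_eq_true, decide_eq_true_eq] at h ⊢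
    exact ⟨h.1, ih h.2 h'⟩

/-- Concatenation of composable paths (first travel `p`, then `q`). -/
def PathIn.comp (p q : PathIn s t) (h : p.tgt = q.src) : PathIn s t :=
  ⟨p.src, q.tgt, p.arrows ++ q.arrows,
    isPath_append p.is_path (by rw [h]; exact q.is_path)⟩

/-- The length-zero path at a vertex (vertex idempotent). -/
def idPath (s t : A → Fin k) (v : Fin k) : PathIn s t :=
  ⟨v, v, [], by simp [isPath]⟩

/-- A model of the path algebra `ℂQ` : a `ℂ`-algebra `R` with a basis indexed by the
oriented paths of the quiver, multiplying by concatenation (zero if not composable),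
whose unit is the sum of the vertex idempotents. -/
structure Model (s t : A → Fin k) (R : Type) [Ring R] [Algebra ℂ R] where
  B : Module.Basis (PathIn s t) ℂ R
  mul_of_comp : ∀ p q : PathIn s t, ∀ h : p.tgt = q.src, B q * B p = B (p.comp q h)
  mul_of_ncomp : ∀ p q : PathIn s t, p.tgt ≠ q.src → B q * B p = 0
  one_eq : (1 : R) = ∑ v : Fin k, B (idPath s t v)

/-- The commutator subspace `[R,R]`, i.e. the `ℂ`-linear span of all commutators. -/
def commSub (R : Type) [Ring R] [Algebra ℂ R] : Submodule ℂ R :=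
  Submodule.span ℂ {z : R | ∃ x y : R, z = x * y - y * x}

/-- The length-one path given by a single arrow. -/
def arrPath (s t : A → Fin k) (a : A) : PathIn s t :=
  ⟨s a, t a, [a], by simp [isPath]⟩

/-- A model of the relative differential forms `Ω•_V ℂQ`: a graded `ℂ`-algebra `W` with
a degree `+1` differential `d` squaring to zero, generated by `ι(ℂQ)` and `d ι(ℂQ)`,
where `d` kills the vertex subalgebra `V`. -/
structure Forms {k : ℕ} {A : Type} {s t : A → Fin k} (R : Type) [Ring R] [Algebra ℂ R]
    (M : Model s t R) (W : Type) [Ring W] [Algebra ℂ W] where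
  gr : ℕ → Submodule ℂ W
  mul_mem : ∀ (m n : ℕ) (x y : W), x ∈ gr m → y ∈ gr n → x * y ∈ gr (m + n)
  ι : R →ₐ[ℂ] W
  ι_mem : ∀ x : R, ι x ∈ gr 0
  d : W →ₗ[ℂ] W
  d_mem : ∀ (n : ℕ) (x : W), x ∈ gr n → d x ∈ gr (n + 1)
  d_leibniz : ∀ (m : ℕ) (x : W), x ∈ gr m → ∀ y : W,
    d (x * y) = d x * y + ((-1 : ℂ) ^ m) • (x * d y)
  d_d : ∀ x : W, d (d x) = 0
  d_vertex : ∀ v : Fin k, d (ι (M.B (idPath s t v))) = 0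
  gen : Algebra.adjoin ℂ (Set.range ι ∪ Set.range fun x => d (ι x)) = ⊤

/-- Index of the basis of `Ω^n_V ℂQ`: tuples `(p₀, p₁, …, p_n)` of oriented paths with
`length(p_i) ≥ 1` for `i ≥ 1` and the starting vertex of `p_i` equal to the end vertex
of `p_{i+1}`. -/
structure FormTuple (s t : A → Fin k) (n : ℕ) where
  p : Fin (n + 1) → PathIn s t
  len : ∀ i : Fin (n + 1), i ≠ 0 → (p i).arrows ≠ []
  link : ∀ i : Fin n, (p i.castSucc).src = (p i.succ).tgt

/-- The relative `n`-form `p₀ dp₁ ⋯ dp_n` associated to a tuple of paths. -/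
noncomputable def formElem {k : ℕ} {A : Type} {s t : A → Fin k}
    {R : Type} [Ring R] [Algebra ℂ R] {M : Model s t R}
    {W : Type} [Ring W] [Algebra ℂ W] (F : Forms R M W)
    {n : ℕ} (tpl : FormTuple s t n) : W :=
  F.ι (M.B (tpl.p 0)) * (List.ofFn fun i : Fin n => F.d (F.ι (M.B (tpl.p i.succ)))).prod

section Aux

theorem PathIn.ext' {p q : PathIn s t} (h1 : p.src = q.src) (h2 : p.tgt = q.tgt)
    (h3 : p.arrows = q.arrows) : p = q := by
  cases p; cases q; simp_all

theorem PathIn.eq_idPath (p : PathIn s t) (h : p.arrows = []) :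
    p = idPath s t p.src := by
  have hp := p.is_path
  rw [h] at hp
  simp only [isPath, decide_eq_true_eq] at hp
  exact PathIn.ext' rfl hp.symm h

theorem FormTuple.ext' {n : ℕ} {tp tq : FormTuple s t n} (h : tp.p = tq.p) : tp = tq := by
  cases tp; cases tq; simp_all

theorem fin_castSucc_succ {n : ℕ} (j : Fin n) :
    (Fin.succ j).castSucc = (j.castSucc).succ := by
  ext; simp

/-- Shift a tuple with nonempty head path: `(p₀,…,pₙ) ↦ (e, p₀, …, pₙ)`
where `e` is the vertex idempotent at the target of `p₀`. -/
def FormTuple.shift {n : ℕ} (tp : FormTuple s t n) (h : (tp.p 0).arrows ≠ []) :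
    FormTuple s t (n + 1) where
  p := Fin.cases (idPath s t (tp.p 0).tgt) (fun i => tp.p i)
  len := by
    intro i hi
    induction i using Fin.cases with
    | zero => exact absurd rfl hi
    | succ j =>
      simp only [Fin.cases_succ]
      by_cases hj : j = 0
      · subst hj; exact h
      · exact tp.len j hj
  link := by
    intro i
    induction i using Fin.cases with
    | zero =>
      simp only [Fin.castSucc_zero, Fin.cases_zero, Fin.cases_succ]
      rfl
    | succ j =>
      rw [fin_castSucc_succ]
      simp only [Fin.cases_succ]
      exact tp.link j

/-- Drop the head path of a tuple: `(p₀, p₁, …, p_{n+1}) ↦ (p₁, …, p_{n+1})`. -/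
def FormTuple.drop {n : ℕ} (tp : FormTuple s t (n + 1)) : FormTuple s t n where
  p := fun i => tp.p i.succ
  len := fun i _ => tp.len i.succ (Fin.succ_ne_zero i)
  link := by
    intro i
    have h := tp.link i.succ
    rw [fin_castSucc_succ] at h
    exact h

theorem FormTuple.drop_head {n : ℕ} (tp : FormTuple s t (n + 1)) :
    ((tp.drop).p 0).arrows ≠ [] :=
  tp.len (Fin.succ 0) (Fin.succ_ne_zero 0)

theorem FormTuple.shift_drop {n : ℕ} (tp : FormTuple s t (n + 1))
    (h : (tp.p 0).arrows = []) : (tp.drop).shift tp.drop_head = tp := by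
  apply FormTuple.ext'
  funext i
  induction i using Fin.cases with
  | zero =>
    show idPath s t ((tp.drop).p 0).tgt = tp.p 0
    have hl := tp.link 0
    rw [Fin.castSucc_zero] at hl
    show idPath s t (tp.p (Fin.succ 0)).tgt = tp.p 0
    rw [← hl]
    exact (PathIn.eq_idPath _ h).symm
  | succ j =>
    show (tp.drop).p j = tp.p (Fin.succ j)
    rfl

theorem FormTuple.shift_inj {n : ℕ} {tp tq : FormTuple s t n}
    {h : (tp.p 0).arrows ≠ []} {h' : (tq.p 0).arrows ≠ []}
    (he : tp.shift h = tq.shift h') : tp = tq := by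
  apply FormTuple.ext'
  funext i
  have := congrArg (fun u : FormTuple s t (n + 1) => u.p i.succ) he
  simpa only [FormTuple.shift, Fin.cases_succ] using this

variable {R : Type} [Ring R] [Algebra ℂ R] {M : Model s t R}
    {W : Type} [Ring W] [Algebra ℂ W] (F : Forms R M W)

theorem Forms.d_one : F.d 1 = 0 := by
  have h1 : (1 : W) ∈ F.gr 0 := by simpa using F.ι_mem 1
  have h := F.d_leibniz 0 1 h1 1
  simp only [mul_one, one_mul, pow_zero, one_smul] at h
  have h2 : F.d 1 + 0 = F.d 1 + F.d 1 := by rw [add_zero]; exact h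
  exact (add_left_cancel h2).symm

theorem Forms.d_prod (l : List R) :
    F.d ((l.map fun r => F.d (F.ι r)).prod) = 0 := by
  induction l with
  | nil => simpa using F.d_one
  | cons r l ih =>
    have hm : F.d (F.ι r) ∈ F.gr 1 := F.d_mem 0 _ (F.ι_mem r)
    simp only [List.map_cons, List.prod_cons]
    rw [F.d_leibniz 1 _ hm, F.d_d, ih, zero_mul, mul_zero, smul_zero, add_zero]

theorem Forms.absorb (p : PathIn s t) :
    F.ι (M.B (idPath s t p.tgt)) * F.d (F.ι (M.B p)) = F.d (F.ι (M.B p)) := by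
  have hm : M.B (idPath s t p.tgt) * M.B p = M.B p := by
    rw [M.mul_of_comp p (idPath s t p.tgt) rfl]
    congr 1
    exact PathIn.ext' rfl rfl (List.append_nil _)
  have h := F.d_leibniz 0 (F.ι (M.B (idPath s t p.tgt))) (F.ι_mem _) (F.ι (M.B p))
  rw [F.d_vertex, zero_mul, zero_add, pow_zero, one_smul, ← map_mul, hm] at h
  exact h.symm

theorem d_formElem {n : ℕ} (tpl : FormTuple s t n) :
    F.d (formElem F tpl) =
      F.d (F.ι (M.B (tpl.p 0))) *
        (List.ofFn fun i : Fin n => F.d (F.ι (M.B (tpl.p i.succ)))).prod := by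
  unfold formElem
  have hL : (List.ofFn fun i : Fin n => F.d (F.ι (M.B (tpl.p i.succ)))) =
      (List.ofFn fun i : Fin n => M.B (tpl.p i.succ)).map fun r => F.d (F.ι r) := by
    rw [List.map_ofFn]; rfl
  rw [F.d_leibniz 0 _ (F.ι_mem _), pow_zero, one_smul, hL, Forms.d_prod, mul_zero, add_zero,
    ← hL]

theorem d_formElem_empty {n : ℕ} (tpl : FormTuple s t n)
    (h : (tpl.p 0).arrows = []) : F.d (formElem F tpl) = 0 := by
  rw [d_formElem, PathIn.eq_idPath _ h, F.d_vertex, zero_mul]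

theorem d_formElem_shift {n : ℕ} (tpl : FormTuple s t n)
    (h : (tpl.p 0).arrows ≠ []) :
    F.d (formElem F tpl) = formElem F (tpl.shift h) := by
  rw [d_formElem]
  unfold formElem
  rw [List.ofFn_succ]
  simp only [FormTuple.shift, Fin.cases_succ, Fin.cases_zero]
  rw [List.prod_cons, ← mul_assoc, Forms.absorb]

theorem repr_expand {m : ℕ} (b : Module.Basis (FormTuple s t m) ℂ (F.gr m))
    (hb : ∀ tpl, (b tpl : W) = formElem F tpl) {x : W} (hx : x ∈ F.gr m) :
    x = ∑ u ∈ (b.repr ⟨x, hx⟩).support, b.repr ⟨x, hx⟩ u • formElem F u := by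
  have h1 := b.linearCombination_repr ⟨x, hx⟩
  rw [Finsupp.linearCombination_apply, Finsupp.sum] at h1
  have h2 := congrArg (Subtype.val : F.gr m → W) h1
  rw [Submodule.coe_sum] at h2
  simp only [SetLike.val_smul, hb] at h2
  exact h2.symm

theorem coeff_vanish {n : ℕ}
    (b' : Module.Basis (FormTuple s t (n + 1)) ℂ (F.gr (n + 1)))
    (hb' : ∀ tpl, (b' tpl : W) = formElem F tpl)
    (S : Finset (FormTuple s t n)) (c : FormTuple s t n → ℂ)
    (hsum : ∑ u ∈ S, c u • F.d (formElem F u) = 0)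
    {u₀ : FormTuple s t n} (hu₀ : u₀ ∈ S) (h₀ : (u₀.p 0).arrows ≠ []) :
    c u₀ = 0 := by
  classical
  set S' := S.filter (fun u => (u.p 0).arrows ≠ []) with hS'
  have hmemf : ∀ u ∈ S', (u.p 0).arrows ≠ [] := fun u hu => (Finset.mem_filter.mp hu).2
  have hsplit : ∑ u ∈ S', c u • F.d (formElem F u) = 0 := by
    rw [← hsum]
    rw [eq_comm, ← Finset.sum_filter_add_sum_filter_not S (fun u => (u.p 0).arrows ≠ [])]
    rw [← hS']
    have : ∑ u ∈ S.filter (fun u => ¬(u.p 0).arrows ≠ []),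
        c u • F.d (formElem F u) = 0 := by
      apply Finset.sum_eq_zero
      intro u hu
      have he : (u.p 0).arrows = [] := not_not.mp (Finset.mem_filter.mp hu).2
      rw [d_formElem_empty F u he, smul_zero]
    rw [this, add_zero]
  have hz : ((∑ u ∈ S'.attach, c u.1 • b' (u.1.shift (hmemf u.1 u.2)) :
      F.gr (n + 1)) : W) = 0 := by
    rw [Submodule.coe_sum]
    simp only [SetLike.val_smul, hb']
    rw [← hsplit, ← Finset.sum_attach S' (fun u => c u • F.d (formElem F u))]
    apply Finset.sum_congr rfl
    intro u _
    rw [d_formElem_shift F u.1 (hmemf u.1 u.2)]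
  have hz0 : (∑ u ∈ S'.attach, c u.1 • b' (u.1.shift (hmemf u.1 u.2)) :
      F.gr (n + 1)) = 0 := by
    exact Subtype.ext hz
  have hr := congrArg (fun z => (b'.repr z) (u₀.shift h₀)) hz0
  simp only [map_sum, map_smul, Module.Basis.repr_self, map_zero, Finsupp.coe_zero,
    Pi.zero_apply, Finset.sum_apply', Finsupp.smul_apply, Finsupp.single_apply,
    smul_eq_mul, mul_ite, mul_one, mul_zero] at hr
  have hu₀' : (⟨u₀, Finset.mem_filter.mpr ⟨hu₀, h₀⟩⟩ : {x // x ∈ S'}) ∈ S'.attach :=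
    Finset.mem_attach _ _
  rw [Finset.sum_eq_single_of_mem _ hu₀'] at hr
  · rw [if_pos rfl] at hr
    exact hr
  · intro u _ hne
    rw [if_neg]
    intro heq
    exact hne (Subtype.ext (FormTuple.shift_inj heq))

theorem formElem_zero (u : FormTuple s t 0) :
    formElem F u = F.ι (M.B (u.p 0)) := by
  unfold formElem
  rw [List.ofFn_zero, List.prod_nil, mul_one]

end Aux

/-- the relative de Rham complex `Ω•_V ℂQ` of the path algebra of a quiver
over the vertex algebra `V = ℂ^k` is acyclic: `H⁰_V(ℂQ) ≅ V` (i.e. the kernel of `d` in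
degree `0` is exactly the span of the vertex idempotents) and `H^n_V(ℂQ) = 0` for all
`n ≥ 1` (every closed form of positive degree is exact).  The proof uses the Euler
derivation `E`, whose Lie derivative acts on a basis form `p₀ dp₁ ⋯ dp_n` by
multiplication with the total length `ℓ(p₀)+⋯+ℓ(p_n)`. -/
theorem relative_deRham_acyclic
    {k : ℕ} {A : Type} [Fintype A] {s t : A → Fin k}
    (R : Type) [Ring R] [Algebra ℂ R] (M : Model s t R)
    (W : Type) [Ring W] [Algebra ℂ W] (F : Forms R M W)
    -- each graded piece Ω^n has the basis of Lemma (statement 7)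
    (bases : ∀ n : ℕ, ∃ b : Module.Basis (FormTuple s t n) ℂ (F.gr n),
      ∀ tpl : FormTuple s t n, (b tpl : W) = formElem F tpl)
    -- the Euler derivation E of ℂQ
    (E : R →ₗ[ℂ] R)
    (hE : ∀ x y : R, E (x * y) = E x * y + x * E y)
    (hEv : ∀ v : Fin k, E (M.B (idPath s t v)) = 0)
    (hEa : ∀ a : A, E (M.B (arrPath s t a)) = M.B (arrPath s t a))
    -- its Lie derivative L_E and contraction i_E on Ω•_V ℂQ
    (LE : W →ₗ[ℂ] W)
    (hLE : ∀ x y : W, LE (x * y) = LE x * y + x * LE y)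
    (hLEι : ∀ x : R, LE (F.ι x) = F.ι (E x))
    (hLEd : ∀ x : R, LE (F.d (F.ι x)) = F.d (F.ι (E x)))
    (iE : W →ₗ[ℂ] W)
    (hiE : ∀ (m : ℕ) (x : W), x ∈ F.gr m → ∀ y : W,
      iE (x * y) = iE x * y + ((-1 : ℂ) ^ m) • (x * iE y))
    (hiEι : ∀ x : R, iE (F.ι x) = 0)
    (hiEd : ∀ x : R, iE (F.d (F.ι x)) = F.ι (E x)) :
    (∀ x : W, x ∈ F.gr 0 → (F.d x = 0 ↔
        x ∈ Submodule.span ℂ (Set.range fun v : Fin k => F.ι (M.B (idPath s t v))))) ∧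
    (∀ (n : ℕ) (x : W), x ∈ F.gr (n + 1) → F.d x = 0 →
        ∃ y ∈ F.gr n, F.d y = x) := by
  classical
  constructor
  · intro x hx
    constructor
    · intro hd
      obtain ⟨b, hb⟩ := bases 0
      obtain ⟨b', hb'⟩ := bases 1
      have hx_eq := repr_expand F b hb hx
      set c := b.repr ⟨x, hx⟩ with hc
      have hdx : ∑ u ∈ c.support, c u • F.d (formElem F u) = 0 := by
        have : F.d x = ∑ u ∈ c.support, c u • F.d (formElem F u) := by
          conv_lhs => rw [hx_eq]
          rw [map_sum]
          simp only [map_smul]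
        rw [← this, hd]
      have hvan : ∀ u ∈ c.support, (u.p 0).arrows ≠ [] → c u = 0 := fun u hu h =>
        coeff_vanish F b' hb' c.support c hdx hu h
      rw [hx_eq]
      apply Submodule.sum_mem
      intro u hu
      by_cases h : (u.p 0).arrows = []
      · apply Submodule.smul_mem
        apply Submodule.subset_span
        refine ⟨(u.p 0).src, ?_⟩
        rw [formElem_zero, PathIn.eq_idPath (u.p 0) h]
        rfl
      · rw [hvan u hu h, zero_smul]
        exact Submodule.zero_mem _
    · intro hsp
      have hle : Submodule.span ℂ (Set.range fun v : Fin k => F.ι (M.B (idPath s t v)))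
          ≤ LinearMap.ker F.d := by
        rw [Submodule.span_le]
        rintro _ ⟨v, rfl⟩
        exact LinearMap.mem_ker.mpr (F.d_vertex v)
      exact LinearMap.mem_ker.mp (hle hsp)
  · intro n x hx hd
    obtain ⟨b, hb⟩ := bases (n + 1)
    obtain ⟨b', hb'⟩ := bases (n + 2)
    obtain ⟨bn, hbn⟩ := bases n
    have hx_eq := repr_expand F b hb hx
    set c := b.repr ⟨x, hx⟩ with hc
    have hdx : ∑ u ∈ c.support, c u • F.d (formElem F u) = 0 := by
      have : F.d x = ∑ u ∈ c.support, c u • F.d (formElem F u) := by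
        conv_lhs => rw [hx_eq]
        rw [map_sum]
        simp only [map_smul]
      rw [← this, hd]
    have hvan : ∀ u ∈ c.support, (u.p 0).arrows ≠ [] → c u = 0 := fun u hu h =>
      coeff_vanish F b' hb' c.support c hdx hu h
    refine ⟨∑ u ∈ c.support, c u • formElem F u.drop, ?_, ?_⟩
    · apply Submodule.sum_mem
      intro u _
      apply Submodule.smul_mem
      rw [← hbn u.drop]
      exact SetLike.coe_mem _
    · rw [map_sum]
      conv_rhs => rw [hx_eq]
      apply Finset.sum_congr rfl
      intro u hu
      rw [map_smul, d_formElem_shift F u.drop u.drop_head]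
      by_cases h : (u.p 0).arrows = []
      · rw [FormTuple.shift_drop u h]
      · rw [hvan u hu h, zero_smul, zero_smul]

end Necklace
end

section
/- The necklace bracket {w_1, w_2}_K = Σ_{a ∈ Q_a} (∂w_1/∂a · ∂w_2/∂a* − ∂w_1/∂a* · ∂w_2/∂a) mod [C𝔔, C𝔔] is antisymmetric and satisfies the Jacobi identity, making the span of necklace words of the double quiver 𝔔 a Lie algebra (the necklace Lie algebra N_Q). -/
namespace Necklace

variable {k : ℕ} {A : Type}

variable {s t : A → Fin k}

variable {R : Type} [Ring R] [Algebra ℂ R]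

/-- The partial derivative `∂p/∂b` of an oriented cycle `p` with respect to the arrow
`b`: the sum, over all occurrences of `b` in `p`, of the path obtained by deleting that
occurrence and reading the cycle starting there (zero on non-cycles). -/
noncomputable def derivPath [DecidableEq A] (M : Model s t R) (b : A) (p : PathIn s t) :
    R :=
  ∑ i ∈ Finset.range p.arrows.length,
    if h : p.src = p.tgt ∧ p.arrows[i]? = some b ∧
        isPath s t (t b) (p.arrows.drop (i + 1) ++ p.arrows.take i) (s b) = true
    then M.B ⟨t b, s b, p.arrows.drop (i + 1) ++ p.arrows.take i, h.2.2⟩ else 0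

/-- The partial differential operator `∂/∂b` on necklace words, as a linear map
`ℂQ → ℂQ` (defined on the basis of paths, zero on non-cycles). -/
noncomputable def D [DecidableEq A] (M : Model s t R) (b : A) : R →ₗ[ℂ] R :=
  M.B.constr ℂ (derivPath M b)

section Double

variable {A₀ : Type} (s₀ t₀ : A₀ → Fin k)

/-- Source map of the double quiver `𝔔` (arrows `a` and reversed arrows `a*`). -/
def ds : A₀ ⊕ A₀ → Fin k := Sum.elim s₀ t₀

/-- Target map of the double quiver `𝔔`. -/
def dt : A₀ ⊕ A₀ → Fin k := Sum.elim t₀ s₀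

variable [DecidableEq A₀] [Fintype A₀]

/-- The Kontsevich (necklace) bracket on `ℂ𝔔`, before passing to the commutator
quotient: `{x,y} = Σ_{a ∈ Q_a} (∂x/∂a ∂y/∂a* − ∂x/∂a* ∂y/∂a)`. -/
noncomputable def br (M : Model (ds s₀ t₀) (dt s₀ t₀) R) (x y : R) : R :=
  ∑ a : A₀,
    (D M (Sum.inl a) x * D M (Sum.inr a) y - D M (Sum.inr a) x * D M (Sum.inl a) y)

/-- `θ` is a `V`-derivation of `ℂ𝔔`. -/
def IsVDer (M : Model (ds s₀ t₀) (dt s₀ t₀) R) (θ : R →ₗ[ℂ] R) : Prop :=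
  (∀ x y : R, θ (x * y) = θ x * y + x * θ y) ∧
    ∀ v : Fin k, θ (M.B (idPath (ds s₀ t₀) (dt s₀ t₀) v)) = 0

/-- `θ` is the derivation `θ_x` attached to `x ∈ ℂ𝔔`, i.e. the `V`-derivation with
`θ(a) = −∂x/∂a*` and `θ(a*) = ∂x/∂a` for every arrow `a` of `Q`. -/
def IsThetaOf (M : Model (ds s₀ t₀) (dt s₀ t₀) R) (x : R) (θ : R →ₗ[ℂ] R) : Prop :=
  IsVDer s₀ t₀ M θ ∧
    ∀ a : A₀,
      θ (M.B (arrPath (ds s₀ t₀) (dt s₀ t₀) (Sum.inl a))) = - D M (Sum.inr a) x ∧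
      θ (M.B (arrPath (ds s₀ t₀) (dt s₀ t₀) (Sum.inr a))) = D M (Sum.inl a) x

end Double

section Infra

variable {k : ℕ} {A : Type} {s t : A → Fin k} {R : Type} [Ring R] [Algebra ℂ R]

theorem isPath_append_iff {l l' : List A} {v u : Fin k} :
    isPath s t v (l ++ l') u = true ↔
      ∃ w, isPath s t v l w = true ∧ isPath s t w l' u = true := by
  induction l generalizing v with
  | nil =>
    constructor
    · intro h; exact ⟨v, by simp [isPath], by simpa using h⟩
    · rintro ⟨w, hw, h⟩
      simp only [isPath, decide_eq_true_eq] at hw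
      subst hw; simpa using h
  | cons a l ih =>
    constructor
    · intro h
      simp only [List.cons_append, isPath, Bool.and_eq_true, decide_eq_true_eq] at h
      obtain ⟨h1, h2⟩ := h
      obtain ⟨w, hw1, hw2⟩ := ih.mp h2
      refine ⟨w, ?_, hw2⟩
      simp only [isPath, Bool.and_eq_true, decide_eq_true_eq]
      exact ⟨h1, hw1⟩
    · rintro ⟨w, hw, h3⟩
      simp only [isPath, Bool.and_eq_true, decide_eq_true_eq] at hw
      simp only [List.cons_append, isPath, Bool.and_eq_true, decide_eq_true_eq]
      exact ⟨hw.1, ih.mpr ⟨w, hw.2, h3⟩⟩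

theorem isPath_split {l : List A} {v u : Fin k} {i : ℕ} {b : A}
    (h : isPath s t v l u = true) (hb : l[i]? = some b) :
    isPath s t v (l.take i) (s b) = true ∧ isPath s t (t b) (l.drop (i + 1)) u = true := by
  have hi : i < l.length := by
    by_contra hc
    rw [List.getElem?_eq_none (by omega)] at hb
    exact absurd hb (by simp)
  have hdec : l = l.take i ++ l[i] :: l.drop (i + 1) := by
    conv_lhs => rw [← List.take_append_drop i l]
    rw [List.drop_eq_getElem_cons hi]
  have hbi : l[i] = b := by
    rw [List.getElem?_eq_getElem hi] at hb
    exact Option.some.inj hb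
  rw [hdec, isPath_append_iff] at h
  obtain ⟨w, hw1, hw2⟩ := h
  simp only [isPath, Bool.and_eq_true, decide_eq_true_eq, hbi] at hw2
  obtain ⟨hw3, hw4⟩ := hw2
  subst hw3
  exact ⟨hw1, hw4⟩

theorem isPath_rd {l : List A} {v : Fin k} {i : ℕ} {b : A}
    (h : isPath s t v l v = true) (hb : l[i]? = some b) :
    isPath s t (t b) (l.drop (i + 1) ++ l.take i) (s b) = true :=
  isPath_append (isPath_split h hb).2 (isPath_split h hb).1

/-- Total-function version of basis elements indexed by path data. -/
noncomputable def pathE (M : Model s t R) (v w : Fin k) (l : List A) : R :=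
  if h : isPath s t v l w = true then M.B ⟨v, w, l, h⟩ else 0

theorem pathE_B (M : Model s t R) (p : PathIn s t) :
    pathE M p.src p.tgt p.arrows = M.B p := by
  rw [pathE, dif_pos p.is_path]

theorem pathE_of_isPath (M : Model s t R) {v w : Fin k} {l : List A}
    (h : isPath s t v l w = true) : pathE M v w l = M.B ⟨v, w, l, h⟩ := dif_pos h

theorem pathE_of_not (M : Model s t R) {v w : Fin k} {l : List A}
    (h : ¬ isPath s t v l w = true) : pathE M v w l = 0 := dif_neg h

theorem pathE_mul (M : Model s t R) {v w u : Fin k} {l l' : List A}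
    (hl : isPath s t v l w = true) (hl' : isPath s t w l' u = true) :
    pathE M w u l' * pathE M v w l = pathE M v u (l ++ l') := by
  rw [pathE_of_isPath M hl, pathE_of_isPath M hl',
    pathE_of_isPath M (isPath_append hl hl')]
  exact M.mul_of_comp ⟨v, w, l, hl⟩ ⟨w, u, l', hl'⟩ rfl

theorem pathE_mul_zero (M : Model s t R) {v w w' u : Fin k} {l l' : List A}
    (hl : isPath s t v l w = true) (hl' : isPath s t w' l' u = true) (hne : w ≠ w') :
    pathE M w' u l' * pathE M v w l = 0 := by
  rw [pathE_of_isPath M hl, pathE_of_isPath M hl']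
  exact M.mul_of_ncomp ⟨v, w, l, hl⟩ ⟨w', u, l', hl'⟩ hne

theorem sum_range_add {W : Type} [AddCommMonoid W] (f : ℕ → W) (a b : ℕ) :
    ∑ i ∈ Finset.range (a + b), f i =
      (∑ i ∈ Finset.range a, f i) + ∑ i ∈ Finset.range b, f (a + i) := by
  induction b with
  | zero => simp
  | succ n ih => rw [← Nat.add_assoc, Finset.sum_range_succ, ih, Finset.sum_range_succ, add_assoc]

theorem Model.induction (M : Model s t R) {P : R → Prop} (hb : ∀ p, P (M.B p)) (h0 : P 0)
    (hadd : ∀ x y, P x → P y → P (x + y)) (hsmul : ∀ (c : ℂ) x, P x → P (c • x)) (x : R) :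
    P x := by
  have hx : x ∈ Submodule.span ℂ (Set.range ⇑M.B) := by rw [M.B.span_eq]; trivial
  refine Submodule.span_induction ?_ h0 ?_ ?_ hx
  · rintro y ⟨p, rfl⟩; exact hb p
  · intro a b _ _ ha hb; exact hadd a b ha hb
  · intro c a _ ha; exact hsmul c a ha

theorem mem_commSub_mul (u v : R) : u * v - v * u ∈ commSub R :=
  Submodule.subset_span ⟨u, v, rfl⟩

end Infra

section DerivInfra

variable {k : ℕ} {A : Type} [DecidableEq A] {s t : A → Fin k}
variable {R : Type} [Ring R] [Algebra ℂ R]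

/-- `DL M b l` : the cyclic derivative of the cyclic word `l` with respect to `b`. -/
noncomputable def DL (M : Model s t R) (b : A) (l : List A) : R :=
  ∑ i ∈ Finset.range l.length,
    if l[i]? = some b then pathE M (t b) (s b) (l.drop (i + 1) ++ l.take i) else 0

theorem derivPath_eq (M : Model s t R) (b : A) (p : PathIn s t) :
    derivPath M b p = if p.src = p.tgt then DL M b p.arrows else 0 := by
  by_cases h : p.src = p.tgt
  · rw [if_pos h, derivPath, DL]
    refine Finset.sum_congr rfl fun i _ => ?_
    by_cases hb : p.arrows[i]? = some b
    · rw [if_pos hb]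
      by_cases hip : isPath s t (t b) (p.arrows.drop (i + 1) ++ p.arrows.take i) (s b) = true
      · rw [dif_pos ⟨h, hb, hip⟩, pathE_of_isPath M hip]
      · rw [dif_neg (fun hc => hip hc.2.2), pathE_of_not M hip]
    · rw [if_neg hb, dif_neg (fun hc => hb hc.2.1)]
  · rw [if_neg h, derivPath]
    exact Finset.sum_eq_zero fun i _ => dif_neg (fun hc => h hc.1)

theorem D_basis (M : Model s t R) (b : A) (p : PathIn s t) :
    D M b (M.B p) = derivPath M b p := by
  rw [D, Module.Basis.constr_basis]

theorem D_pathE (M : Model s t R) (b : A) {v w : Fin k} {l : List A}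
    (h : isPath s t v l w = true) :
    D M b (pathE M v w l) = if v = w then DL M b l else 0 := by
  rw [pathE_of_isPath M h, D_basis, derivPath_eq]

theorem DL_rot1 (M : Model s t R) (b : A) (x : A) (m : List A) :
    DL M b (x :: m) = DL M b (m ++ [x]) := by
  rw [DL, DL, show (x :: m).length = m.length + 1 from rfl,
    show (m ++ [x]).length = m.length + 1 by simp]
  rw [Finset.sum_range_succ' _ m.length, Finset.sum_range_succ _ m.length]
  congr 1
  · refine Finset.sum_congr rfl fun i hi => ?_
    rw [Finset.mem_range] at hi
    have h1 : (x :: m)[i + 1]? = m[i]? := List.getElem?_cons_succ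
    have h2 : (m ++ [x])[i]? = m[i]? := by
      rw [List.getElem?_append]; rw [if_pos hi]
    rw [h1, h2]
    have h3 : (x :: m).drop (i + 1 + 1) ++ (x :: m).take (i + 1) =
        (m.drop (i + 1) ++ [x]) ++ (m ++ [x]).take i := by
      have e1 : (x :: m).drop (i + 1 + 1) = m.drop (i + 1) := rfl
      have e2 : (x :: m).take (i + 1) = x :: m.take i := rfl
      have e3 : (m ++ [x]).take i = m.take i := by
        rw [List.take_append, Nat.sub_eq_zero_of_le (le_of_lt hi),
          List.take_zero, List.append_nil]
      rw [e1, e2, e3, List.append_assoc, List.singleton_append]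
    have h4 : (m ++ [x]).drop (i + 1) = m.drop (i + 1) ++ [x] := by
      rw [List.drop_append, Nat.sub_eq_zero_of_le hi, List.drop_zero]
    rw [h3, h4]
  · have h1 : (x :: m)[0]? = some x := List.getElem?_cons_zero
    have h2 : (m ++ [x])[m.length]? = some x := by
      rw [List.getElem?_append_right (le_refl _), Nat.sub_self]; rfl
    rw [h1, h2]
    have h3 : (x :: m).drop 1 ++ (x :: m).take 0 = m ++ [] := rfl
    have h4 : (m ++ [x]).drop (m.length + 1) ++ (m ++ [x]).take m.length = [] ++ m := by
      rw [List.drop_append, List.drop_eq_nil_of_le (by omega),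
        List.take_append, List.take_length, Nat.sub_self, List.take_zero,
        List.append_nil, Nat.add_sub_cancel_left]
      rfl
    rw [h3, h4, List.append_nil, List.nil_append]

theorem DL_rot (M : Model s t R) (b : A) (l1 l2 : List A) :
    DL M b (l1 ++ l2) = DL M b (l2 ++ l1) := by
  induction l1 generalizing l2 with
  | nil => rw [List.nil_append, List.append_nil]
  | cons x l1 ih =>
    rw [List.cons_append, DL_rot1, List.append_assoc, ih, List.append_assoc,
      List.singleton_append]

theorem D_mul_comm (M : Model s t R) (b : A) (u v : R) :
    D M b (u * v) = D M b (v * u) := by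
  have basis : ∀ p q : PathIn s t, D M b (M.B p * M.B q) = D M b (M.B q * M.B p) := by
    intro p q
    by_cases h1 : q.tgt = p.src
    · by_cases h2 : p.tgt = q.src
      · rw [M.mul_of_comp q p h1, M.mul_of_comp p q h2, D_basis, D_basis,
          derivPath_eq, derivPath_eq]
        rw [if_pos (show (q.comp p h1).src = (q.comp p h1).tgt from h2.symm),
          if_pos (show (p.comp q h2).src = (p.comp q h2).tgt from h1.symm)]
        exact DL_rot M b q.arrows p.arrows
      · rw [M.mul_of_comp q p h1, M.mul_of_ncomp p q h2, map_zero, D_basis, derivPath_eq]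
        have : ¬ (q.comp p h1).src = (q.comp p h1).tgt := fun hc => h2 (Eq.symm hc)
        rw [if_neg this]
    · by_cases h2 : p.tgt = q.src
      · rw [M.mul_of_ncomp q p h1, M.mul_of_comp p q h2, map_zero, D_basis, derivPath_eq]
        have : ¬ (p.comp q h2).src = (p.comp q h2).tgt := fun hc => h1 (Eq.symm hc)
        rw [if_neg this]
      · rw [M.mul_of_ncomp q p h1, M.mul_of_ncomp p q h2]
  have step1 : ∀ (q : PathIn s t) (u : R), D M b (u * M.B q) = D M b (M.B q * u) := by
    intro q u
    refine M.induction (P := fun u => D M b (u * M.B q) = D M b (M.B q * u))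
      (fun p => basis p q) ?_ ?_ ?_ u
    · simp
    · intro x y hx hy
      rw [add_mul, mul_add, map_add, map_add, hx, hy]
    · intro c x hx
      rw [smul_mul_assoc, mul_smul_comm, map_smul, map_smul, hx]
  refine M.induction (P := fun v => D M b (u * v) = D M b (v * u)) (fun q => step1 q u) ?_ ?_ ?_ v
  · simp
  · intro x y hx hy
    rw [mul_add, add_mul, map_add, map_add, hx, hy]
  · intro c x hx
    rw [mul_smul_comm, smul_mul_assoc, map_smul, map_smul, hx]

theorem D_comm (M : Model s t R) (b : A) {z : R} (hz : z ∈ commSub R) : D M b z = 0 := by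
  refine Submodule.span_induction ?_ (map_zero _) ?_ ?_ hz
  · rintro x ⟨u, v, rfl⟩
    rw [map_sub, D_mul_comm M b u v, sub_self]
  · intro x y _ _ hx hy; rw [map_add, hx, hy, add_zero]
  · intro c x _ hx; rw [map_smul, hx, smul_zero]

theorem mk_cyc (u v : R) :
    Submodule.Quotient.mk (p := commSub R) (u * v) = Submodule.Quotient.mk (v * u) :=
  (Submodule.Quotient.eq _).2 (mem_commSub_mul u v)

theorem mk_sandwich (a w c : R) :
    Submodule.Quotient.mk (p := commSub R) (a * w * c) = Submodule.Quotient.mk (w * (c * a)) := by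
  rw [mk_cyc (a * w) c, ← mul_assoc, mk_cyc (c * a) w]

end DerivInfra

section SandWrap

variable {k : ℕ} {A : Type} [DecidableEq A] {s t : A → Fin k}
variable {R : Type} [Ring R] [Algebra ℂ R]

/-- Substitute `z` for each occurrence of the arrow `c` in the path `l : v → w`. -/
noncomputable def Sand (M : Model s t R) (c : A) (z : R) (l : List A) (v w : Fin k) : R :=
  ∑ i ∈ Finset.range l.length,
    if l[i]? = some c then
      pathE M (t c) w (l.drop (i + 1)) * z * pathE M v (s c) (l.take i) else 0

/-- For each occurrence of the arrow `c` in the cyclic word obtained by closing up the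
path `l : v → w` with `z`, delete that occurrence and read the resulting path. -/
noncomputable def Wrap (M : Model s t R) (c : A) (z : R) (l : List A) (v w : Fin k) : R :=
  ∑ i ∈ Finset.range l.length,
    if l[i]? = some c then
      pathE M v (s c) (l.take i) * z * pathE M (t c) w (l.drop (i + 1)) else 0

theorem Sand_add (M : Model s t R) (c : A) (z z' : R) (l : List A) (v w : Fin k) :
    Sand M c (z + z') l v w = Sand M c z l v w + Sand M c z' l v w := by
  rw [Sand, Sand, Sand, ← Finset.sum_add_distrib]
  refine Finset.sum_congr rfl fun i _ => ?_
  by_cases hc : l[i]? = some c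
  · simp only [if_pos hc, mul_add, add_mul]
  · simp only [if_neg hc, add_zero]

theorem Sand_smul (M : Model s t R) (c : A) (a : ℂ) (z : R) (l : List A) (v w : Fin k) :
    Sand M c (a • z) l v w = a • Sand M c z l v w := by
  rw [Sand, Sand, Finset.smul_sum]
  refine Finset.sum_congr rfl fun i _ => ?_
  by_cases hc : l[i]? = some c
  · simp only [if_pos hc, mul_smul_comm, smul_mul_assoc]
  · simp only [if_neg hc, smul_zero]

theorem Wrap_add (M : Model s t R) (c : A) (z z' : R) (l : List A) (v w : Fin k) :
    Wrap M c (z + z') l v w = Wrap M c z l v w + Wrap M c z' l v w := by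
  rw [Wrap, Wrap, Wrap, ← Finset.sum_add_distrib]
  refine Finset.sum_congr rfl fun i _ => ?_
  by_cases hc : l[i]? = some c
  · simp only [if_pos hc, mul_add, add_mul]
  · simp only [if_neg hc, add_zero]

theorem Wrap_smul (M : Model s t R) (c : A) (a : ℂ) (z : R) (l : List A) (v w : Fin k) :
    Wrap M c (a • z) l v w = a • Wrap M c z l v w := by
  rw [Wrap, Wrap, Finset.smul_sum]
  refine Finset.sum_congr rfl fun i _ => ?_
  by_cases hc : l[i]? = some c
  · simp only [if_pos hc, mul_smul_comm, smul_mul_assoc]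
  · simp only [if_neg hc, smul_zero]

/-- `Smap M c z y` : substitute `z` at each `c`-occurrence of `y`. Bilinear in `(z, y)`. -/
noncomputable def Smap (M : Model s t R) (c : A) : R →ₗ[ℂ] R →ₗ[ℂ] R where
  toFun z := M.B.constr ℂ (fun q => Sand M c z q.arrows q.src q.tgt)
  map_add' z z' := by
    refine Module.Basis.ext M.B fun q => ?_
    rw [LinearMap.add_apply, Module.Basis.constr_basis, Module.Basis.constr_basis, Module.Basis.constr_basis,
      Sand_add]
  map_smul' a z := by
    have h : (M.B.constr ℂ fun q => Sand M c (a • z) q.arrows q.src q.tgt)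
        = a • ((M.B.constr ℂ fun q => Sand M c z q.arrows q.src q.tgt) : R →ₗ[ℂ] R) := by
      refine Module.Basis.ext M.B fun q => ?_
      rw [LinearMap.smul_apply, Module.Basis.constr_basis, Module.Basis.constr_basis, Sand_smul]
    simpa using h

/-- `Wmap M c z y` : for each `c`-occurrence of the cycle closing up `y` by `z`,
delete it and read the resulting path. Bilinear in `(z, y)`. -/
noncomputable def Wmap (M : Model s t R) (c : A) : R →ₗ[ℂ] R →ₗ[ℂ] R where
  toFun z := M.B.constr ℂ (fun q => Wrap M c z q.arrows q.src q.tgt)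
  map_add' z z' := by
    refine Module.Basis.ext M.B fun q => ?_
    rw [LinearMap.add_apply, Module.Basis.constr_basis, Module.Basis.constr_basis, Module.Basis.constr_basis,
      Wrap_add]
  map_smul' a z := by
    have h : (M.B.constr ℂ fun q => Wrap M c (a • z) q.arrows q.src q.tgt)
        = a • ((M.B.constr ℂ fun q => Wrap M c z q.arrows q.src q.tgt) : R →ₗ[ℂ] R) := by
      refine Module.Basis.ext M.B fun q => ?_
      rw [LinearMap.smul_apply, Module.Basis.constr_basis, Module.Basis.constr_basis, Wrap_smul]
    simpa using h

theorem Smap_basis (M : Model s t R) (c : A) (z : R) (q : PathIn s t) :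
    Smap M c z (M.B q) = Sand M c z q.arrows q.src q.tgt :=
  Module.Basis.constr_basis M.B ℂ (fun q => Sand M c z q.arrows q.src q.tgt) q

theorem Wmap_basis (M : Model s t R) (c : A) (z : R) (q : PathIn s t) :
    Wmap M c z (M.B q) = Wrap M c z q.arrows q.src q.tgt :=
  Module.Basis.constr_basis M.B ℂ (fun q => Wrap M c z q.arrows q.src q.tgt) q

theorem Smap_pathE (M : Model s t R) (c : A) (z : R) {v w : Fin k} {l : List A}
    (h : isPath s t v l w = true) :
    Smap M c z (pathE M v w l) = Sand M c z l v w := by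
  rw [pathE_of_isPath M h, Smap_basis]

theorem Wmap_pathE (M : Model s t R) (c : A) (z : R) {v w : Fin k} {l : List A}
    (h : isPath s t v l w = true) :
    Wmap M c z (pathE M v w l) = Wrap M c z l v w := by
  rw [pathE_of_isPath M h, Wmap_basis]

theorem Sand_append (M : Model s t R) (c : A) (z : R) {v w u : Fin k} {m l : List A}
    (hm : isPath s t v m w = true) (hl : isPath s t w l u = true) :
    Sand M c z (m ++ l) v u =
      pathE M w u l * Sand M c z m v w + Sand M c z l w u * pathE M v w m := by
  rw [Sand, List.length_append, sum_range_add, Sand, Sand, Finset.mul_sum, Finset.sum_mul]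
  congr 1
  · refine Finset.sum_congr rfl fun i hi => ?_
    rw [Finset.mem_range] at hi
    rw [List.getElem?_append (l₂ := l), if_pos hi]
    by_cases hc : m[i]? = some c
    · rw [if_pos hc, if_pos hc]
      obtain ⟨htk, hdr⟩ := isPath_split hm hc
      have e1 : (m ++ l).drop (i + 1) = m.drop (i + 1) ++ l := by
        rw [List.drop_append, Nat.sub_eq_zero_of_le (by omega), List.drop_zero]
      have e2 : (m ++ l).take i = m.take i := by
        rw [List.take_append, Nat.sub_eq_zero_of_le (by omega),
          List.take_zero, List.append_nil]
      rw [e1, e2, ← pathE_mul M hdr hl]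
      simp only [mul_assoc]
    · rw [if_neg hc, if_neg hc, mul_zero]
  · refine Finset.sum_congr rfl fun i hi => ?_
    rw [Finset.mem_range] at hi
    rw [List.getElem?_append_right (by omega : m.length ≤ m.length + i),
      Nat.add_sub_cancel_left]
    by_cases hc : l[i]? = some c
    · rw [if_pos hc, if_pos hc]
      obtain ⟨htk, hdr⟩ := isPath_split hl hc
      have e1 : (m ++ l).drop (m.length + i + 1) = l.drop (i + 1) := by
        rw [List.drop_append, List.drop_eq_nil_of_le (by omega),
          List.nil_append]
        congr 1
        omega
      have e2 : (m ++ l).take (m.length + i) = m ++ l.take i := by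
        rw [List.take_append, List.take_of_length_le (by omega),
          Nat.add_sub_cancel_left]
      rw [e1, e2, ← pathE_mul M hm htk]
      simp only [mul_assoc]
    · rw [if_neg hc, if_neg hc, zero_mul]

theorem DL_glue (M : Model s t R) (c : A) {v w : Fin k} {m l : List A}
    (hm : isPath s t v m w = true) (hl : isPath s t w l v = true) :
    DL M c (m ++ l) =
      Wrap M c (pathE M w v l) m v w + Wrap M c (pathE M v w m) l w v := by
  rw [DL, List.length_append, sum_range_add, Wrap, Wrap]
  congr 1
  · refine Finset.sum_congr rfl fun i hi => ?_
    rw [Finset.mem_range] at hi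
    rw [List.getElem?_append (l₂ := l), if_pos hi]
    by_cases hc : m[i]? = some c
    · rw [if_pos hc, if_pos hc]
      obtain ⟨htk, hdr⟩ := isPath_split hm hc
      have e1 : (m ++ l).drop (i + 1) = m.drop (i + 1) ++ l := by
        rw [List.drop_append, Nat.sub_eq_zero_of_le (by omega), List.drop_zero]
      have e2 : (m ++ l).take i = m.take i := by
        rw [List.take_append, Nat.sub_eq_zero_of_le (by omega),
          List.take_zero, List.append_nil]
      rw [e1, e2, mul_assoc, pathE_mul M hdr hl, pathE_mul M (isPath_append hdr hl) htk]
    · rw [if_neg hc, if_neg hc]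
  · refine Finset.sum_congr rfl fun i hi => ?_
    rw [Finset.mem_range] at hi
    rw [List.getElem?_append_right (by omega : m.length ≤ m.length + i),
      Nat.add_sub_cancel_left]
    by_cases hc : l[i]? = some c
    · rw [if_pos hc, if_pos hc]
      obtain ⟨htk, hdr⟩ := isPath_split hl hc
      have e1 : (m ++ l).drop (m.length + i + 1) = l.drop (i + 1) := by
        rw [List.drop_append, List.drop_eq_nil_of_le (by omega),
          List.nil_append]
        congr 1
        omega
      have e2 : (m ++ l).take (m.length + i) = m ++ l.take i := by
        rw [List.take_append, List.take_of_length_le (by omega),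
          Nat.add_sub_cancel_left]
      rw [e1, e2, ← List.append_assoc, mul_assoc, pathE_mul M hdr hm,
        pathE_mul M (isPath_append hdr hm) htk]
    · rw [if_neg hc, if_neg hc]

end SandWrap

section ProductRules

variable {k : ℕ} {A : Type} [DecidableEq A] {s t : A → Fin k}
variable {R : Type} [Ring R] [Algebra ℂ R]

theorem Smap_mul (M : Model s t R) (c : A) (z : R) (u v : R) :
    Smap M c z (u * v) = u * Smap M c z v + Smap M c z u * v := by
  have basis : ∀ p q : PathIn s t,
      Smap M c z (M.B p * M.B q)
        = M.B p * Smap M c z (M.B q) + Smap M c z (M.B p) * M.B q := by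
    intro p q
    rw [Smap_basis, Smap_basis]
    by_cases h : q.tgt = p.src
    · rw [M.mul_of_comp q p h, Smap_basis]
      show Sand M c z (q.arrows ++ p.arrows) q.src p.tgt = _
      have hp : isPath s t q.tgt p.arrows p.tgt = true := by rw [h]; exact p.is_path
      rw [Sand_append M c z q.is_path hp]
      have e1 : pathE M q.tgt p.tgt p.arrows = M.B p := by rw [h]; exact pathE_B M p
      have e2 : Sand M c z p.arrows q.tgt p.tgt = Sand M c z p.arrows p.src p.tgt := by
        rw [h]
      rw [e1, e2, pathE_B M q]
    · rw [M.mul_of_ncomp q p h, map_zero]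
      have hz1 : M.B p * Sand M c z q.arrows q.src q.tgt = 0 := by
        rw [Sand, Finset.mul_sum]
        refine Finset.sum_eq_zero fun i _ => ?_
        by_cases hc : q.arrows[i]? = some c
        · rw [if_pos hc]
          obtain ⟨htk, hdr⟩ := isPath_split q.is_path hc
          rw [← mul_assoc, ← mul_assoc, ← pathE_B M p,
            pathE_mul_zero M hdr p.is_path h, zero_mul, zero_mul]
        · rw [if_neg hc, mul_zero]
      have hz2 : Sand M c z p.arrows p.src p.tgt * M.B q = 0 := by
        rw [Sand, Finset.sum_mul]
        refine Finset.sum_eq_zero fun i _ => ?_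
        by_cases hc : p.arrows[i]? = some c
        · rw [if_pos hc]
          obtain ⟨htk, hdr⟩ := isPath_split p.is_path hc
          rw [mul_assoc, ← pathE_B M q, pathE_mul_zero M q.is_path htk h, mul_zero]
        · rw [if_neg hc, zero_mul]
      rw [hz1, hz2, add_zero]
  have step1 : ∀ (q : PathIn s t) (u : R),
      Smap M c z (u * M.B q) = u * Smap M c z (M.B q) + Smap M c z u * M.B q := by
    intro q u
    refine M.induction (P := fun u =>
      Smap M c z (u * M.B q) = u * Smap M c z (M.B q) + Smap M c z u * M.B q)
      (fun p => basis p q) ?_ ?_ ?_ u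
    · simp
    · intro x y hx hy
      simp only [add_mul, mul_add, map_add, LinearMap.add_apply, smul_mul_assoc,
        mul_smul_comm, map_smul, LinearMap.smul_apply, smul_add, hx, hy]
      try abel
    · intro a x hx
      simp only [add_mul, mul_add, map_add, LinearMap.add_apply, smul_mul_assoc,
        mul_smul_comm, map_smul, LinearMap.smul_apply, smul_add, hx]
      try abel
  refine M.induction (P := fun v =>
    Smap M c z (u * v) = u * Smap M c z v + Smap M c z u * v)
    (fun q => step1 q u) ?_ ?_ ?_ v
  · simp
  · intro x y hx hy
    simp only [add_mul, mul_add, map_add, LinearMap.add_apply, smul_mul_assoc,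
      mul_smul_comm, map_smul, LinearMap.smul_apply, smul_add, hx, hy]
    try abel
  · intro a x hx
    simp only [add_mul, mul_add, map_add, LinearMap.add_apply, smul_mul_assoc,
      mul_smul_comm, map_smul, LinearMap.smul_apply, smul_add, hx]
    try abel

theorem D_mul (M : Model s t R) (c : A) (u v : R) :
    D M c (u * v) = Wmap M c u v + Wmap M c v u := by
  have basis : ∀ p q : PathIn s t,
      D M c (M.B p * M.B q)
        = Wmap M c (M.B p) (M.B q) + Wmap M c (M.B q) (M.B p) := by
    intro p q
    rw [Wmap_basis, Wmap_basis]
    by_cases h : q.tgt = p.src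
    · rw [M.mul_of_comp q p h, D_basis, derivPath_eq]
      by_cases hc : q.src = p.tgt
      · rw [if_pos (show (q.comp p h).src = (q.comp p h).tgt from hc)]
        show DL M c (q.arrows ++ p.arrows) = _
        have hp : isPath s t q.tgt p.arrows q.src = true := by
          rw [h, hc]; exact p.is_path
        rw [DL_glue M c q.is_path hp]
        have e1 : pathE M q.tgt q.src p.arrows = M.B p := by
          rw [h, hc]; exact pathE_B M p
        have e2 : Wrap M c (M.B q) p.arrows q.tgt q.src
            = Wrap M c (M.B q) p.arrows p.src p.tgt := by rw [h, hc]
        rw [e1, pathE_B M q, e2]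
      · rw [if_neg (show ¬ (q.comp p h).src = (q.comp p h).tgt from hc)]
        have hz1 : Wrap M c (M.B p) q.arrows q.src q.tgt = 0 := by
          rw [Wrap]
          refine Finset.sum_eq_zero fun i _ => ?_
          by_cases hcc : q.arrows[i]? = some c
          · rw [if_pos hcc]
            obtain ⟨htk, hdr⟩ := isPath_split q.is_path hcc
            have hpq : isPath s t q.tgt p.arrows p.tgt = true := by rw [h]; exact p.is_path
            rw [mul_assoc, ← pathE_B M p, ← h, pathE_mul M hdr hpq,
              pathE_mul_zero M (isPath_append hdr hpq) htk (fun e => hc e.symm)]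
          · rw [if_neg hcc]
        have hz2 : Wrap M c (M.B q) p.arrows p.src p.tgt = 0 := by
          rw [Wrap]
          refine Finset.sum_eq_zero fun i _ => ?_
          by_cases hcc : p.arrows[i]? = some c
          · rw [if_pos hcc]
            obtain ⟨htk, hdr⟩ := isPath_split p.is_path hcc
            rw [mul_assoc, ← pathE_B M q,
              pathE_mul_zero M hdr q.is_path (fun e => hc e.symm), mul_zero]
          · rw [if_neg hcc]
        rw [hz1, hz2, add_zero]
    · rw [M.mul_of_ncomp q p h, map_zero]
      have hz1 : Wrap M c (M.B p) q.arrows q.src q.tgt = 0 := by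
        rw [Wrap]
        refine Finset.sum_eq_zero fun i _ => ?_
        by_cases hcc : q.arrows[i]? = some c
        · rw [if_pos hcc]
          obtain ⟨htk, hdr⟩ := isPath_split q.is_path hcc
          rw [mul_assoc, ← pathE_B M p, pathE_mul_zero M hdr p.is_path h, mul_zero]
        · rw [if_neg hcc]
      have hz2 : Wrap M c (M.B q) p.arrows p.src p.tgt = 0 := by
        rw [Wrap]
        refine Finset.sum_eq_zero fun i _ => ?_
        by_cases hcc : p.arrows[i]? = some c
        · rw [if_pos hcc]
          obtain ⟨htk, hdr⟩ := isPath_split p.is_path hcc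
          by_cases hq : p.tgt = q.src
          · have hql : isPath s t p.tgt q.arrows q.tgt = true := by
              rw [hq]; exact q.is_path
            rw [mul_assoc, ← pathE_B M q, ← hq, pathE_mul M hdr hql,
              pathE_mul_zero M (isPath_append hdr hql) htk h]
          · rw [mul_assoc, ← pathE_B M q, pathE_mul_zero M hdr q.is_path hq, mul_zero]
        · rw [if_neg hcc]
      rw [hz1, hz2, add_zero]
  have step1 : ∀ (q : PathIn s t) (u : R),
      D M c (u * M.B q) = Wmap M c u (M.B q) + Wmap M c (M.B q) u := by
    intro q u
    refine M.induction (P := fun u =>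
      D M c (u * M.B q) = Wmap M c u (M.B q) + Wmap M c (M.B q) u)
      (fun p => basis p q) ?_ ?_ ?_ u
    · simp
    · intro x y hx hy
      simp only [add_mul, mul_add, map_add, LinearMap.add_apply, smul_mul_assoc,
        mul_smul_comm, map_smul, LinearMap.smul_apply, smul_add, hx, hy]
      try abel
    · intro a x hx
      simp only [add_mul, mul_add, map_add, LinearMap.add_apply, smul_mul_assoc,
        mul_smul_comm, map_smul, LinearMap.smul_apply, smul_add, hx]
      try abel
  refine M.induction (P := fun v =>
    D M c (u * v) = Wmap M c u v + Wmap M c v u)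
    (fun q => step1 q u) ?_ ?_ ?_ v
  · simp
  · intro x y hx hy
    simp only [add_mul, mul_add, map_add, LinearMap.add_apply, smul_mul_assoc,
      mul_smul_comm, map_smul, LinearMap.smul_apply, smul_add, hx, hy]
    try abel
  · intro a x hx
    simp only [add_mul, mul_add, map_add, LinearMap.add_apply, smul_mul_assoc,
      mul_smul_comm, map_smul, LinearMap.smul_apply, smul_add, hx]
    try abel

end ProductRules

section Exchange

variable {k : ℕ} {A : Type} [DecidableEq A] {s t : A → Fin k}
variable {R : Type} [Ring R] [Algebra ℂ R]

theorem sum_range_split {W : Type} [AddCommMonoid W] (f : ℕ → W) {a n : ℕ} (h : a ≤ n) :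
    ∑ i ∈ Finset.range n, f i =
      (∑ i ∈ Finset.range a, f i) + ∑ i ∈ Finset.range (n - a), f (a + i) := by
  conv_lhs => rw [show n = a + (n - a) from by omega]
  exact sum_range_add f a (n - a)

/-- The common refinement of the two double sums in the exchange lemma. -/
noncomputable def Gq (M : Model s t R) (b c : A) (u : R) (Q : List A) (j₀ j : ℕ) : R :=
  if Q[j₀]? = some c then
    if Q[j]? = some b then
      if j₀ < j then
        pathE M (t b) (s c) (Q.drop (j + 1) ++ Q.take j₀) * u *
          pathE M (t c) (s b) ((Q.take j).drop (j₀ + 1))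
      else if j < j₀ then
        pathE M (t b) (s c) ((Q.take j₀).drop (j + 1)) * u *
          pathE M (t c) (s b) (Q.drop (j₀ + 1) ++ Q.take j)
      else 0
    else 0
  else 0

theorem Gq_diag (M : Model s t R) (b c : A) (u : R) (Q : List A) (j₀ : ℕ) :
    Gq M b c u Q j₀ j₀ = 0 := by
  rw [Gq]
  by_cases hc : Q[j₀]? = some c
  · rw [if_pos hc]
    by_cases hb : Q[j₀]? = some b
    · rw [if_pos hb, if_neg (lt_irrefl _), if_neg (lt_irrefl _)]
    · rw [if_neg hb]
  · rw [if_neg hc]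

theorem sandA (M : Model s t R) (b c : A) (u : R) (Q : List A) {j₀ : ℕ}
    (hj₀ : j₀ < Q.length) (hc : Q[j₀]? = some c) :
    Sand M b u (Q.drop (j₀ + 1) ++ Q.take j₀) (t c) (s c) =
      ∑ j ∈ Finset.range Q.length, Gq M b c u Q j₀ j := by
  have hlen : (Q.drop (j₀ + 1) ++ Q.take j₀).length = (Q.length - (j₀ + 1)) + j₀ := by
    simp only [List.length_append, List.length_drop, List.length_take]
    omega
  rw [Sand, hlen, sum_range_add, sum_range_split (fun j => Gq M b c u Q j₀ j)
    (show j₀ + 1 ≤ Q.length from by omega), Finset.sum_range_succ, Gq_diag, add_zero,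
    add_comm]
  congr 1
  · -- positions in the `take` part :  j = i < j₀
    refine Finset.sum_congr rfl fun i hi => ?_
    rw [Finset.mem_range] at hi
    have hidx : (Q.drop (j₀ + 1) ++ Q.take j₀)[Q.length - (j₀ + 1) + i]? = Q[i]? := by
      rw [List.getElem?_append_right (by simp only [List.length_drop]; omega),
        show Q.length - (j₀ + 1) + i - (Q.drop (j₀ + 1)).length = i from by
          simp only [List.length_drop]; omega,
        List.getElem?_take, if_pos hi]
    rw [hidx, Gq, if_pos hc]
    by_cases hb : Q[i]? = some b
    · rw [if_pos hb, if_pos hb, if_neg (by omega : ¬ j₀ < i), if_pos hi]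
      have e1 : (Q.drop (j₀ + 1) ++ Q.take j₀).drop (Q.length - (j₀ + 1) + i + 1) =
          (Q.take j₀).drop (i + 1) := by
        rw [List.drop_append,
          List.drop_eq_nil_of_le (by simp only [List.length_drop]; omega), List.nil_append,
          show Q.length - (j₀ + 1) + i + 1 - (Q.drop (j₀ + 1)).length = i + 1 from by
            simp only [List.length_drop]; omega]
      have e2 : (Q.drop (j₀ + 1) ++ Q.take j₀).take (Q.length - (j₀ + 1) + i) =
          Q.drop (j₀ + 1) ++ Q.take i := by
        rw [List.take_append,
          List.take_of_length_le (by simp only [List.length_drop]; omega),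
          show Q.length - (j₀ + 1) + i - (Q.drop (j₀ + 1)).length = i from by
            simp only [List.length_drop]; omega,
          List.take_take, show i ⊓ j₀ = i from by omega]
      rw [e1, e2]
    · rw [if_neg hb, if_neg hb]
  · -- positions in the `drop` part :  j = j₀ + 1 + i
    refine Finset.sum_congr rfl fun i hi => ?_
    rw [Finset.mem_range] at hi
    have hidx : (Q.drop (j₀ + 1) ++ Q.take j₀)[i]? = Q[j₀ + 1 + i]? := by
      rw [List.getElem?_append, if_pos (by simp only [List.length_drop]; omega),
        List.getElem?_drop]
    rw [hidx, Gq, if_pos hc]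
    by_cases hb : Q[j₀ + 1 + i]? = some b
    · rw [if_pos hb, if_pos hb, if_pos (by omega : j₀ < j₀ + 1 + i)]
      have e1 : (Q.drop (j₀ + 1) ++ Q.take j₀).drop (i + 1) =
          Q.drop (j₀ + 1 + i + 1) ++ Q.take j₀ := by
        rw [List.drop_append,
          Nat.sub_eq_zero_of_le (by simp only [List.length_drop]; omega), List.drop_zero,
          List.drop_drop, show j₀ + 1 + (i + 1) = j₀ + 1 + i + 1 from by omega]
      have e2 : (Q.drop (j₀ + 1) ++ Q.take j₀).take i = (Q.take (j₀ + 1 + i)).drop (j₀ + 1) := by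
        rw [List.take_append,
          Nat.sub_eq_zero_of_le (by simp only [List.length_drop]; omega), List.take_zero,
          List.append_nil, List.drop_take, show j₀ + 1 + i - (j₀ + 1) = i from by omega]
      rw [e1, e2]
    · rw [if_neg hb, if_neg hb]

theorem wrapB (M : Model s t R) (b c : A) (u : R) (Q : List A) {j : ℕ}
    (hj : j < Q.length) (hb : Q[j]? = some b) :
    Wrap M c u (Q.drop (j + 1) ++ Q.take j) (t b) (s b) =
      ∑ j₀ ∈ Finset.range Q.length, Gq M b c u Q j₀ j := by
  have hlen : (Q.drop (j + 1) ++ Q.take j).length = (Q.length - (j + 1)) + j := by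
    simp only [List.length_append, List.length_drop, List.length_take]
    omega
  rw [Wrap, hlen, sum_range_add, sum_range_split (fun j₀ => Gq M b c u Q j₀ j)
    (show j + 1 ≤ Q.length from by omega), Finset.sum_range_succ, Gq_diag, add_zero,
    add_comm]
  congr 1
  · -- positions in the `take` part :  j₀ = i < j  (term A)
    refine Finset.sum_congr rfl fun i hi => ?_
    rw [Finset.mem_range] at hi
    have hidx : (Q.drop (j + 1) ++ Q.take j)[Q.length - (j + 1) + i]? = Q[i]? := by
      rw [List.getElem?_append_right (by simp only [List.length_drop]; omega),
        show Q.length - (j + 1) + i - (Q.drop (j + 1)).length = i from by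
          simp only [List.length_drop]; omega,
        List.getElem?_take, if_pos hi]
    rw [hidx, Gq]
    by_cases hcc : Q[i]? = some c
    · rw [if_pos hcc, if_pos hcc, if_pos hb, if_pos hi]
      have e1 : (Q.drop (j + 1) ++ Q.take j).take (Q.length - (j + 1) + i) =
          Q.drop (j + 1) ++ Q.take i := by
        rw [List.take_append,
          List.take_of_length_le (by simp only [List.length_drop]; omega),
          show Q.length - (j + 1) + i - (Q.drop (j + 1)).length = i from by
            simp only [List.length_drop]; omega,
          List.take_take, show i ⊓ j = i from by omega]
      have e2 : (Q.drop (j + 1) ++ Q.take j).drop (Q.length - (j + 1) + i + 1) =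
          (Q.take j).drop (i + 1) := by
        rw [List.drop_append,
          List.drop_eq_nil_of_le (by simp only [List.length_drop]; omega), List.nil_append,
          show Q.length - (j + 1) + i + 1 - (Q.drop (j + 1)).length = i + 1 from by
            simp only [List.length_drop]; omega]
      rw [e1, e2]
    · rw [if_neg hcc, if_neg hcc]
  · -- positions in the `drop` part :  j₀ = j + 1 + i > j  (term B)
    refine Finset.sum_congr rfl fun i hi => ?_
    rw [Finset.mem_range] at hi
    have hidx : (Q.drop (j + 1) ++ Q.take j)[i]? = Q[j + 1 + i]? := by
      rw [List.getElem?_append, if_pos (by simp only [List.length_drop]; omega),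
        List.getElem?_drop]
    rw [hidx, Gq]
    by_cases hcc : Q[j + 1 + i]? = some c
    · rw [if_pos hcc, if_pos hcc, if_pos hb, if_neg (by omega : ¬ j + 1 + i < j),
        if_pos (by omega : j < j + 1 + i)]
      have e1 : (Q.drop (j + 1) ++ Q.take j).take i = (Q.take (j + 1 + i)).drop (j + 1) := by
        rw [List.take_append,
          Nat.sub_eq_zero_of_le (by simp only [List.length_drop]; omega), List.take_zero,
          List.append_nil, List.drop_take, show j + 1 + i - (j + 1) = i from by omega]
      have e2 : (Q.drop (j + 1) ++ Q.take j).drop (i + 1) =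
          Q.drop (j + 1 + i + 1) ++ Q.take j := by
        rw [List.drop_append,
          Nat.sub_eq_zero_of_le (by simp only [List.length_drop]; omega), List.drop_zero,
          List.drop_drop, show j + 1 + (i + 1) = j + 1 + i + 1 from by omega]
      rw [e1, e2]
    · rw [if_neg hcc, if_neg hcc]

/-- The key exchange identity : substituting `u` for `b`-occurrences in `∂z/∂c`
equals reading off `c`-occurrences of the cycle closing `∂z/∂b` up with `u`. -/
theorem Smap_D_eq_Wmap_D (M : Model s t R) (b c : A) (u z : R) :
    Smap M b u (D M c z) = Wmap M c u (D M b z) := by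
  refine M.induction (P := fun z => Smap M b u (D M c z) = Wmap M c u (D M b z)) ?_ ?_ ?_ ?_ z
  · intro q
    rw [D_basis, D_basis, derivPath_eq, derivPath_eq]
    by_cases hq : q.src = q.tgt
    · rw [if_pos hq, if_pos hq]
      have hcyc : isPath s t q.src q.arrows q.src = true := by
        have h := q.is_path; rw [← hq] at h; exact h
      rw [DL, DL, map_sum, map_sum]
      calc
        ∑ j₀ ∈ Finset.range q.arrows.length, Smap M b u
            (if q.arrows[j₀]? = some c then
              pathE M (t c) (s c) (q.arrows.drop (j₀ + 1) ++ q.arrows.take j₀) else 0)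
          = ∑ j₀ ∈ Finset.range q.arrows.length,
              ∑ j ∈ Finset.range q.arrows.length, Gq M b c u q.arrows j₀ j := by
            refine Finset.sum_congr rfl fun j₀ hj₀ => ?_
            rw [Finset.mem_range] at hj₀
            by_cases hcc : q.arrows[j₀]? = some c
            · rw [if_pos hcc, Smap_pathE M b u (isPath_rd hcyc hcc),
                sandA M b c u q.arrows hj₀ hcc]
            · rw [if_neg hcc, map_zero]
              exact (Finset.sum_eq_zero fun j _ => by rw [Gq, if_neg hcc]).symm
        _ = ∑ j ∈ Finset.range q.arrows.length,
              ∑ j₀ ∈ Finset.range q.arrows.length, Gq M b c u q.arrows j₀ j :=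
            Finset.sum_comm
        _ = ∑ j ∈ Finset.range q.arrows.length, Wmap M c u
            (if q.arrows[j]? = some b then
              pathE M (t b) (s b) (q.arrows.drop (j + 1) ++ q.arrows.take j) else 0) := by
            refine Finset.sum_congr rfl fun j hj => ?_
            rw [Finset.mem_range] at hj
            by_cases hbb : q.arrows[j]? = some b
            · rw [if_pos hbb, Wmap_pathE M c u (isPath_rd hcyc hbb),
                wrapB M b c u q.arrows hj hbb]
            · rw [if_neg hbb, map_zero]
              refine Finset.sum_eq_zero fun j₀ _ => ?_
              rw [Gq]
              by_cases hcc : q.arrows[j₀]? = some c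
              · rw [if_pos hcc, if_neg hbb]
              · rw [if_neg hcc]
    · rw [if_neg hq, if_neg hq, map_zero, map_zero]
  · show Smap M b u (D M c 0) = Wmap M c u (D M b 0)
    rw [map_zero, map_zero, map_zero, map_zero]
  · intro x y hx hy
    rw [map_add, map_add, map_add, map_add, hx, hy]
  · intro a x hx
    rw [map_smul, map_smul, map_smul, map_smul, hx]

end Exchange

section Derivations
set_option linter.unusedSectionVars false

variable {k : ℕ} {A : Type} [DecidableEq A] {s t : A → Fin k}
variable {R : Type} [Ring R] [Algebra ℂ R]

theorem der_ext (M : Model s t R) (θ₁ θ₂ : R →ₗ[ℂ] R)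
    (h₁ : ∀ x y : R, θ₁ (x * y) = θ₁ x * y + x * θ₁ y)
    (h₂ : ∀ x y : R, θ₂ (x * y) = θ₂ x * y + x * θ₂ y)
    (hid₁ : ∀ v, θ₁ (M.B (idPath s t v)) = 0) (hid₂ : ∀ v, θ₂ (M.B (idPath s t v)) = 0)
    (harr : ∀ a : A, θ₁ (M.B (arrPath s t a)) = θ₂ (M.B (arrPath s t a))) :
    θ₁ = θ₂ := by
  have aux : ∀ (l : List A) (v w : Fin k) (hp : isPath s t v l w = true),
      θ₁ (M.B ⟨v, w, l, hp⟩) = θ₂ (M.B ⟨v, w, l, hp⟩) := by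
    intro l
    induction l with
    | nil =>
      intro v w hp
      have hv : v = w := by
        simpa only [isPath, decide_eq_true_eq] using hp
      subst hv
      have he : M.B (⟨v, v, [], hp⟩ : PathIn s t) = M.B (idPath s t v) := rfl
      rw [he, hid₁, hid₂]
    | cons a l ih =>
      intro v w hp
      have h := hp
      simp only [isPath, Bool.and_eq_true, decide_eq_true_eq] at h
      obtain ⟨hsa, hl⟩ := h
      subst hsa
      have hcomp : M.B (⟨s a, w, a :: l, hp⟩ : PathIn s t)
          = M.B (⟨t a, w, l, hl⟩ : PathIn s t) * M.B (arrPath s t a) := by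
        rw [M.mul_of_comp (arrPath s t a) (⟨t a, w, l, hl⟩ : PathIn s t) rfl]
        exact rfl
      rw [hcomp, h₁, h₂, harr a, ih (t a) w hl]
  refine Module.Basis.ext M.B fun p => ?_
  obtain ⟨v, w, l, hp⟩ := p
  exact aux l v w hp

theorem der_commSub (θ : R →ₗ[ℂ] R) (hθ : ∀ x y : R, θ (x * y) = θ x * y + x * θ y)
    {z : R} (hz : z ∈ commSub R) : θ z ∈ commSub R := by
  refine Submodule.span_induction ?_ ?_ ?_ ?_ hz
  · rintro x ⟨u, v, rfl⟩
    rw [map_sub, hθ, hθ]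
    have he : θ u * v + u * θ v - (θ v * u + v * θ u)
        = (θ u * v - v * θ u) + (u * θ v - θ v * u) := by abel
    rw [he]
    exact Submodule.add_mem _ (mem_commSub_mul _ _) (mem_commSub_mul _ _)
  · rw [map_zero]; exact Submodule.zero_mem _
  · intro x y _ _ hx hy; rw [map_add]; exact Submodule.add_mem _ hx hy
  · intro a x _ hx; rw [map_smul]; exact Submodule.smul_mem _ _ hx

theorem id_mul_pathE (M : Model s t R) (u v : Fin k) (l : List A) :
    pathE M v v [] * pathE M u v l = pathE M u v l := by
  by_cases h : isPath s t u l v = true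
  · have h0 : isPath s t v ([] : List A) v = true := by simp [isPath]
    rw [pathE_mul M h h0, List.append_nil]
  · rw [pathE_of_not M h, mul_zero]

theorem pathE_mul_id (M : Model s t R) (u v : Fin k) (l : List A) :
    pathE M u v l * pathE M u u [] = pathE M u v l := by
  by_cases h : isPath s t u l v = true
  · have h0 : isPath s t u ([] : List A) u = true := by simp [isPath]
    rw [pathE_mul M h0 h, List.nil_append]
  · rw [pathE_of_not M h, zero_mul]

theorem pathE_id (M : Model s t R) (v : Fin k) :
    pathE M v v [] = M.B (idPath s t v) := pathE_B M (idPath s t v)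

theorem id_mul_D (M : Model s t R) (c : A) (z : R) :
    pathE M (s c) (s c) [] * D M c z = D M c z := by
  refine M.induction (P := fun z => pathE M (s c) (s c) [] * D M c z = D M c z) ?_ ?_ ?_ ?_ z
  · intro q
    rw [D_basis, derivPath_eq]
    by_cases hq : q.src = q.tgt
    · rw [if_pos hq, DL, Finset.mul_sum]
      refine Finset.sum_congr rfl fun i _ => ?_
      by_cases hc : q.arrows[i]? = some c
      · rw [if_pos hc, id_mul_pathE]
      · rw [if_neg hc, mul_zero]
    · rw [if_neg hq, mul_zero]
  · show pathE M (s c) (s c) [] * D M c 0 = D M c 0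
    rw [map_zero, mul_zero]
  · intro x y hx hy
    rw [map_add, mul_add, hx, hy]
  · intro a x hx
    rw [map_smul, mul_smul_comm, hx]

theorem D_mul_id (M : Model s t R) (c : A) (z : R) :
    D M c z * pathE M (t c) (t c) [] = D M c z := by
  refine M.induction (P := fun z => D M c z * pathE M (t c) (t c) [] = D M c z) ?_ ?_ ?_ ?_ z
  · intro q
    rw [D_basis, derivPath_eq]
    by_cases hq : q.src = q.tgt
    · rw [if_pos hq, DL, Finset.sum_mul]
      refine Finset.sum_congr rfl fun i _ => ?_
      by_cases hc : q.arrows[i]? = some c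
      · rw [if_pos hc, pathE_mul_id]
      · rw [if_neg hc, zero_mul]
    · rw [if_neg hq, zero_mul]
  · show D M c 0 * pathE M (t c) (t c) [] = D M c 0
    rw [map_zero, zero_mul]
  · intro x y hx hy
    rw [map_add, add_mul, hx, hy]
  · intro a x hx
    rw [map_smul, smul_mul_assoc, hx]

end Derivations

section DoubleLemmas
set_option linter.unusedSectionVars false

variable {k : ℕ} {A₀ : Type} [DecidableEq A₀] [Fintype A₀] (s₀ t₀ : A₀ → Fin k)
variable {R : Type} [Ring R] [Algebra ℂ R] (M : Model (ds s₀ t₀) (dt s₀ t₀) R)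

/-- Sign of an arrow of the double quiver. -/
def eps {A₀ : Type} : A₀ ⊕ A₀ → ℂ := Sum.elim (fun _ => (1 : ℂ)) (fun _ => (-1 : ℂ))

theorem eps_swap {A₀ : Type} (b : A₀ ⊕ A₀) : eps b.swap = -eps b := by
  cases b <;> simp [eps]

theorem sum_swap_reindex {W : Type} [AddCommMonoid W] (f : A₀ ⊕ A₀ → W) :
    ∑ b : A₀ ⊕ A₀, f (Sum.swap b) = ∑ b : A₀ ⊕ A₀, f b :=
  Fintype.sum_equiv (Equiv.sumComm A₀ A₀) _ _ (fun _ => rfl)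

theorem br_eq (x y : R) :
    br s₀ t₀ M x y = ∑ b : A₀ ⊕ A₀, eps b • (D M b x * D M b.swap y) := by
  rw [br, Fintype.sum_sum_type, ← Finset.sum_add_distrib]
  refine Finset.sum_congr rfl fun a _ => ?_
  simp [eps, sub_eq_add_neg]

theorem br_add_left (x x' y : R) :
    br s₀ t₀ M (x + x') y = br s₀ t₀ M x y + br s₀ t₀ M x' y := by
  rw [br_eq, br_eq, br_eq, ← Finset.sum_add_distrib]
  refine Finset.sum_congr rfl fun b _ => ?_
  rw [map_add, add_mul, smul_add]

theorem br_smul_left (a : ℂ) (x y : R) :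
    br s₀ t₀ M (a • x) y = a • br s₀ t₀ M x y := by
  rw [br_eq, br_eq, Finset.smul_sum]
  refine Finset.sum_congr rfl fun b _ => ?_
  rw [map_smul, smul_mul_assoc, smul_comm]

theorem br_add_right (x y y' : R) :
    br s₀ t₀ M x (y + y') = br s₀ t₀ M x y + br s₀ t₀ M x y' := by
  rw [br_eq, br_eq, br_eq, ← Finset.sum_add_distrib]
  refine Finset.sum_congr rfl fun b _ => ?_
  rw [map_add, mul_add, smul_add]

theorem br_smul_right (a : ℂ) (x y : R) :
    br s₀ t₀ M x (a • y) = a • br s₀ t₀ M x y := by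
  rw [br_eq, br_eq, Finset.smul_sum]
  refine Finset.sum_congr rfl fun b _ => ?_
  rw [map_smul, mul_smul_comm, smul_comm]

theorem br_commSub_left {x : R} (hx : x ∈ commSub R) (y : R) : br s₀ t₀ M x y = 0 := by
  rw [br_eq]
  refine Finset.sum_eq_zero fun b _ => ?_
  rw [D_comm M b hx, zero_mul, smul_zero]

theorem br_commSub_right (x : R) {y : R} (hy : y ∈ commSub R) : br s₀ t₀ M x y = 0 := by
  rw [br_eq]
  refine Finset.sum_eq_zero fun b _ => ?_
  rw [D_comm M b.swap hy, mul_zero, smul_zero]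

theorem antisym_mem (u v : R) : br s₀ t₀ M u v + br s₀ t₀ M v u ∈ commSub R := by
  have h2 : br s₀ t₀ M v u = ∑ b : A₀ ⊕ A₀, (-(eps b)) • (D M b.swap v * D M b u) := by
    rw [br_eq, ← sum_swap_reindex (fun b => eps b • (D M b v * D M b.swap u))]
    refine Finset.sum_congr rfl fun b _ => ?_
    rw [eps_swap, Sum.swap_swap]
  rw [br_eq, h2, ← Finset.sum_add_distrib]
  refine Submodule.sum_mem _ fun b _ => ?_
  rw [neg_smul, ← smul_neg, ← smul_add, ← sub_eq_add_neg]
  exact Submodule.smul_mem _ _ (mem_commSub_mul _ _)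

/-- The canonical `V`-derivation `θ_x` attached to `x`. -/
noncomputable def Theta (x : R) : R →ₗ[ℂ] R :=
  ∑ b : A₀ ⊕ A₀, (-(eps b)) • Smap M b (D M b.swap x)

theorem Theta_apply (x z : R) :
    Theta s₀ t₀ M x z = ∑ b : A₀ ⊕ A₀, (-(eps b)) • Smap M b (D M b.swap x) z := by
  rw [Theta, LinearMap.sum_apply]
  refine Finset.sum_congr rfl fun b _ => ?_
  rw [LinearMap.smul_apply]

theorem theta_mul (x u v : R) :
    Theta s₀ t₀ M x (u * v) = Theta s₀ t₀ M x u * v + u * Theta s₀ t₀ M x v := by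
  rw [Theta_apply, Theta_apply, Theta_apply, Finset.sum_mul, Finset.mul_sum,
    ← Finset.sum_add_distrib]
  refine Finset.sum_congr rfl fun b _ => ?_
  rw [Smap_mul, smul_add, mul_smul_comm, smul_mul_assoc, add_comm]

theorem theta_id (x : R) (v : Fin k) :
    Theta s₀ t₀ M x (M.B (idPath (ds s₀ t₀) (dt s₀ t₀) v)) = 0 := by
  rw [Theta_apply]
  refine Finset.sum_eq_zero fun b _ => ?_
  rw [Smap_basis]
  show (-(eps b)) • Sand M b (D M b.swap x) [] v v = 0
  rw [Sand]
  simp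

theorem theta_arr (x : R) (e : A₀ ⊕ A₀) :
    Theta s₀ t₀ M x (M.B (arrPath (ds s₀ t₀) (dt s₀ t₀) e)) = (-(eps e)) • D M e.swap x := by
  rw [Theta_apply]
  have hterm : ∀ b : A₀ ⊕ A₀, (-(eps b)) • Smap M b (D M b.swap x)
      (M.B (arrPath (ds s₀ t₀) (dt s₀ t₀) e))
      = if e = b then
          (-(eps b)) • (pathE M (dt s₀ t₀ e) (dt s₀ t₀ e) [] * D M b.swap x *
            pathE M (ds s₀ t₀ e) (ds s₀ t₀ e) []) else 0 := by
    intro b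
    rw [Smap_basis]
    show (-(eps b)) • Sand M b (D M b.swap x) [e] (ds s₀ t₀ e) (dt s₀ t₀ e) = _
    rw [Sand]
    simp only [List.length_cons, List.length_nil, zero_add, Finset.sum_range_one,
      List.getElem?_cons_zero, Option.some.injEq, List.drop_succ_cons, List.drop_nil,
      List.drop_one, List.tail_cons, List.take_zero]
    by_cases he : e = b
    · subst he
      rw [if_pos rfl, if_pos rfl]
      try rfl
    · rw [if_neg he, if_neg he, smul_zero]
  rw [Finset.sum_congr rfl (fun b _ => hterm b),
    Finset.sum_ite_eq Finset.univ e (fun b => (-(eps b)) •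
      (pathE M (dt s₀ t₀ e) (dt s₀ t₀ e) [] * D M b.swap x *
        pathE M (ds s₀ t₀ e) (ds s₀ t₀ e) [])),
    if_pos (Finset.mem_univ e)]
  have e1 : dt s₀ t₀ e = ds s₀ t₀ e.swap := by cases e <;> rfl
  have e2 : ds s₀ t₀ e = dt s₀ t₀ e.swap := by cases e <;> rfl
  rw [e1, e2, id_mul_D, D_mul_id]

theorem K_identity (c : A₀ ⊕ A₀) (x y : R) :
    D M c (br s₀ t₀ M x y)
      = Theta s₀ t₀ M x (D M c y) - Theta s₀ t₀ M y (D M c x) := by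
  rw [br_eq, map_sum]
  have hT : ∀ (x' y' : R), Theta s₀ t₀ M x' (D M c y')
      = ∑ b : A₀ ⊕ A₀, (-(eps b)) • Wmap M c (D M b.swap x') (D M b y') := by
    intro x' y'
    rw [Theta_apply]
    refine Finset.sum_congr rfl fun b _ => ?_
    rw [Smap_D_eq_Wmap_D]
  rw [hT, hT]
  have hswap : ∑ b : A₀ ⊕ A₀, (-(eps b)) • Wmap M c (D M b.swap x) (D M b y)
      = ∑ b : A₀ ⊕ A₀, eps b • Wmap M c (D M b x) (D M b.swap y) := by
    rw [← sum_swap_reindex (fun b => (-(eps b)) • Wmap M c (D M b.swap x) (D M b y))]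
    refine Finset.sum_congr rfl fun b _ => ?_
    rw [eps_swap, Sum.swap_swap, neg_neg]
  rw [hswap, ← Finset.sum_sub_distrib]
  refine Finset.sum_congr rfl fun b _ => ?_
  rw [map_smul, D_mul, smul_add, neg_smul, sub_neg_eq_add]

theorem theta_br (x y : R) :
    Theta s₀ t₀ M (br s₀ t₀ M x y)
      = Theta s₀ t₀ M x ∘ₗ Theta s₀ t₀ M y - Theta s₀ t₀ M y ∘ₗ Theta s₀ t₀ M x := by
  refine der_ext M _ _ (fun u v => theta_mul s₀ t₀ M _ u v) ?_
    (fun v => theta_id s₀ t₀ M _ v) ?_ ?_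
  · intro u v
    simp only [LinearMap.sub_apply, LinearMap.comp_apply]
    rw [theta_mul, map_add, theta_mul, theta_mul, theta_mul, map_add, theta_mul, theta_mul]
    simp only [sub_mul, mul_sub, add_mul, mul_add]
    abel
  · intro v
    simp only [LinearMap.sub_apply, LinearMap.comp_apply]
    rw [theta_id, theta_id, map_zero, map_zero, sub_zero]
  · intro e
    rw [theta_arr]
    simp only [LinearMap.sub_apply, LinearMap.comp_apply]
    rw [theta_arr, theta_arr, map_smul, map_smul, ← smul_sub, ← K_identity]

end DoubleLemmas

section Final
set_option linter.unusedSectionVars false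

variable {k : ℕ} {A₀ : Type} [DecidableEq A₀] [Fintype A₀] (s₀ t₀ : A₀ → Fin k)
variable {R : Type} [Ring R] [Algebra ℂ R] (M : Model (ds s₀ t₀) (dt s₀ t₀) R)

theorem theta_minus_br_mem (x z : R) :
    Theta s₀ t₀ M x z - br s₀ t₀ M x z ∈ commSub R := by
  refine M.induction
    (P := fun z => Theta s₀ t₀ M x z - br s₀ t₀ M x z ∈ commSub R) ?_ ?_ ?_ ?_ z
  · intro q
    obtain ⟨v, w, l, hp⟩ := q
    by_cases hq : v = w
    · subst hq
      rw [← Submodule.Quotient.eq]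
      have hL : (commSub R).mkQ (Theta s₀ t₀ M x (M.B ⟨v, v, l, hp⟩))
          = ∑ b : A₀ ⊕ A₀, (-(eps b)) • ∑ i ∈ Finset.range l.length,
              (if l[i]? = some b then (commSub R).mkQ (D M b.swap x *
                pathE M (dt s₀ t₀ b) (ds s₀ t₀ b) (l.drop (i + 1) ++ l.take i)) else 0) := by
        rw [Theta_apply, map_sum]
        refine Finset.sum_congr rfl fun b _ => ?_
        rw [map_smul, Smap_basis]
        show (-(eps b)) • (commSub R).mkQ (Sand M b (D M b.swap x) l v v) = _
        congr 1
        rw [Sand, map_sum]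
        refine Finset.sum_congr rfl fun i _ => ?_
        by_cases hc : l[i]? = some b
        · rw [if_pos hc, if_pos hc]
          obtain ⟨htk, hdr⟩ := isPath_split hp hc
          have hmul : pathE M v (ds s₀ t₀ b) (l.take i) *
              pathE M (dt s₀ t₀ b) v (l.drop (i + 1))
              = pathE M (dt s₀ t₀ b) (ds s₀ t₀ b) (l.drop (i + 1) ++ l.take i) :=
            pathE_mul M hdr htk
          rw [Submodule.mkQ_apply, Submodule.mkQ_apply, mk_sandwich, hmul]
        · rw [if_neg hc, if_neg hc, map_zero]
      have hR : (commSub R).mkQ (br s₀ t₀ M x (M.B ⟨v, v, l, hp⟩))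
          = ∑ b : A₀ ⊕ A₀, (-(eps b)) • ∑ i ∈ Finset.range l.length,
              (if l[i]? = some b then (commSub R).mkQ (D M b.swap x *
                pathE M (dt s₀ t₀ b) (ds s₀ t₀ b) (l.drop (i + 1) ++ l.take i)) else 0) := by
        rw [br_eq, ← sum_swap_reindex
          (fun b => eps b • (D M b x * D M b.swap (M.B ⟨v, v, l, hp⟩))), map_sum]
        refine Finset.sum_congr rfl fun b _ => ?_
        rw [eps_swap, Sum.swap_swap, map_smul]
        congr 1
        rw [D_basis, derivPath_eq,
          if_pos (show (⟨v, v, l, hp⟩ : PathIn (ds s₀ t₀) (dt s₀ t₀)).src = _ from rfl)]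
        show (commSub R).mkQ (D M b.swap x * DL M b l) = _
        rw [DL, Finset.mul_sum, map_sum]
        refine Finset.sum_congr rfl fun i _ => ?_
        by_cases hc : l[i]? = some b
        · rw [if_pos hc, if_pos hc]
        · rw [if_neg hc, if_neg hc, mul_zero, map_zero]
      have := hL.trans hR.symm
      rw [Submodule.mkQ_apply, Submodule.mkQ_apply] at this
      exact this
    · have hbr : br s₀ t₀ M x (M.B ⟨v, w, l, hp⟩) = 0 := by
        rw [br_eq]
        refine Finset.sum_eq_zero fun b _ => ?_
        rw [D_basis, derivPath_eq,
          if_neg (show ¬ (⟨v, w, l, hp⟩ : PathIn (ds s₀ t₀) (dt s₀ t₀)).src = _ from hq),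
          mul_zero, smul_zero]
      rw [hbr, sub_zero, Theta_apply]
      refine Submodule.sum_mem _ fun b _ => ?_
      refine Submodule.smul_mem _ _ ?_
      rw [Smap_basis]
      show Sand M b (D M b.swap x) l v w ∈ commSub R
      rw [Sand]
      refine Submodule.sum_mem _ fun i _ => ?_
      by_cases hc : l[i]? = some b
      · rw [if_pos hc]
        obtain ⟨htk, hdr⟩ := isPath_split hp hc
        have h0 : pathE M v (ds s₀ t₀ b) (l.take i) *
            pathE M (dt s₀ t₀ b) w (l.drop (i + 1)) = 0 :=
          pathE_mul_zero M hdr htk (fun e => hq e.symm)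
        refine (Submodule.Quotient.mk_eq_zero _).1 ?_
        rw [mk_sandwich, h0, mul_zero]
        exact Submodule.Quotient.mk_zero _
      · rw [if_neg hc]
        exact Submodule.zero_mem _
  · have h0 : br s₀ t₀ M x (0 : R) = 0 := by
      rw [br_eq]
      refine Finset.sum_eq_zero fun b _ => ?_
      rw [map_zero, mul_zero, smul_zero]
    show Theta s₀ t₀ M x 0 - br s₀ t₀ M x 0 ∈ commSub R
    rw [map_zero, h0, sub_zero]
    exact Submodule.zero_mem _
  · intro z z' hz hz'
    have he : Theta s₀ t₀ M x (z + z') - br s₀ t₀ M x (z + z')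
        = (Theta s₀ t₀ M x z - br s₀ t₀ M x z)
          + (Theta s₀ t₀ M x z' - br s₀ t₀ M x z') := by
      rw [map_add, br_add_right]; abel
    rw [he]
    exact Submodule.add_mem _ hz hz'
  · intro a z hz
    have he : Theta s₀ t₀ M x (a • z) - br s₀ t₀ M x (a • z)
        = a • (Theta s₀ t₀ M x z - br s₀ t₀ M x z) := by
      rw [map_smul, br_smul_right, smul_sub]
    rw [he]
    exact Submodule.smul_mem _ _ hz

theorem mk_br_theta (x z : R) :
    (commSub R).mkQ (br s₀ t₀ M x z) = (commSub R).mkQ (Theta s₀ t₀ M x z) := by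
  rw [Submodule.mkQ_apply, Submodule.mkQ_apply, Submodule.Quotient.eq]
  have h := theta_minus_br_mem s₀ t₀ M x z
  have he : br s₀ t₀ M x z - Theta s₀ t₀ M x z
      = -(Theta s₀ t₀ M x z - br s₀ t₀ M x z) := by abel
  rw [he]
  exact Submodule.neg_mem _ h

theorem jacobi_mem (x y z : R) :
    br s₀ t₀ M (br s₀ t₀ M x y) z + br s₀ t₀ M (br s₀ t₀ M y z) x
      + br s₀ t₀ M (br s₀ t₀ M z x) y ∈ commSub R := by
  have mk0 : ∀ w : R, w ∈ commSub R ↔ (commSub R).mkQ w = 0 := fun w => by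
    rw [Submodule.mkQ_apply, Submodule.Quotient.mk_eq_zero]
  rw [mk0, map_add, map_add]
  have hmix : ∀ u v w : R, (commSub R).mkQ (Theta s₀ t₀ M u (Theta s₀ t₀ M v w))
      = (commSub R).mkQ (br s₀ t₀ M u (br s₀ t₀ M v w)) := by
    intro u v w
    have e1 : (commSub R).mkQ (Theta s₀ t₀ M u (Theta s₀ t₀ M v w))
        = (commSub R).mkQ (Theta s₀ t₀ M u (br s₀ t₀ M v w)) := by
      rw [Submodule.mkQ_apply, Submodule.mkQ_apply, Submodule.Quotient.eq, ← map_sub]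
      exact der_commSub _ (fun a b => theta_mul s₀ t₀ M u a b)
        (theta_minus_br_mem s₀ t₀ M v w)
    rw [e1, ← mk_br_theta]
  have h1 : (commSub R).mkQ (br s₀ t₀ M (br s₀ t₀ M x y) z)
      = (commSub R).mkQ (br s₀ t₀ M x (br s₀ t₀ M y z))
        - (commSub R).mkQ (br s₀ t₀ M y (br s₀ t₀ M x z)) := by
    rw [mk_br_theta, theta_br]
    simp only [LinearMap.sub_apply, LinearMap.comp_apply, map_sub]
    rw [hmix x y z, hmix y x z]
  have anti : ∀ u v : R, (commSub R).mkQ (br s₀ t₀ M u v)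
      = - (commSub R).mkQ (br s₀ t₀ M v u) := by
    intro u v
    refine eq_neg_of_add_eq_zero_left ?_
    rw [← map_add]
    exact ((mk0 _).1 (antisym_mem s₀ t₀ M u v))
  have h2 : (commSub R).mkQ (br s₀ t₀ M (br s₀ t₀ M y z) x)
      = - (commSub R).mkQ (br s₀ t₀ M x (br s₀ t₀ M y z)) := anti _ _
  have h3 : (commSub R).mkQ (br s₀ t₀ M (br s₀ t₀ M z x) y)
      = (commSub R).mkQ (br s₀ t₀ M y (br s₀ t₀ M x z)) := by
    rw [anti]
    have hb : br s₀ t₀ M y (br s₀ t₀ M z x) + br s₀ t₀ M y (br s₀ t₀ M x z) = 0 := by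
      rw [← br_add_right]
      exact br_commSub_right s₀ t₀ M y (antisym_mem s₀ t₀ M z x)
    have hc : (commSub R).mkQ (br s₀ t₀ M y (br s₀ t₀ M z x))
        = - (commSub R).mkQ (br s₀ t₀ M y (br s₀ t₀ M x z)) := by
      refine eq_neg_of_add_eq_zero_left ?_
      rw [← map_add, hb, map_zero]
    rw [hc, neg_neg]
  rw [h1, h2, h3]
  abel

end Final

/-- the necklace bracket
`{w₁,w₂}_K = Σ_{a ∈ Q_a} (∂w₁/∂a ∂w₂/∂a* − ∂w₁/∂a* ∂w₂/∂a) mod [ℂ𝔔,ℂ𝔔]` descends to a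
well-defined bilinear bracket on `ℂ𝔔/[ℂ𝔔,ℂ𝔔]` (whose basis is the set of necklace
words of the double quiver `𝔔`), which is antisymmetric and satisfies the Jacobi
identity — making it the necklace Lie algebra `N_Q`. -/
theorem necklace_bracket_lie_algebra
    {k : ℕ} {A₀ : Type} [DecidableEq A₀] [Fintype A₀] (s₀ t₀ : A₀ → Fin k)
    (R : Type) [Ring R] [Algebra ℂ R] (M : Model (ds s₀ t₀) (dt s₀ t₀) R) :
    ∃ br' : (R ⧸ commSub R) →ₗ[ℂ] (R ⧸ commSub R) →ₗ[ℂ] (R ⧸ commSub R),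
      (∀ p q : PathIn (ds s₀ t₀) (dt s₀ t₀), p.src = p.tgt → q.src = q.tgt →
        br' (Submodule.Quotient.mk (p := commSub R) (M.B p))
            (Submodule.Quotient.mk (p := commSub R) (M.B q)) =
          Submodule.Quotient.mk (p := commSub R) (br s₀ t₀ M (M.B p) (M.B q))) ∧
      (∀ x y : R ⧸ commSub R, br' x y = - br' y x) ∧
      (∀ x y z : R ⧸ commSub R,
        br' (br' x y) z + br' (br' y z) x + br' (br' z x) y = 0) := by
  classical
  let BrL : R →ₗ[ℂ] R →ₗ[ℂ] R :=
    LinearMap.mk₂ ℂ (br s₀ t₀ M) (br_add_left s₀ t₀ M) (br_smul_left s₀ t₀ M)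
      (br_add_right s₀ t₀ M) (br_smul_right s₀ t₀ M)
  have BrL_apply : ∀ x y : R, BrL x y = br s₀ t₀ M x y := fun x y => rfl
  have key : ∀ x : R, commSub R ≤ LinearMap.ker ((commSub R).mkQ ∘ₗ BrL x) := by
    intro x y hy
    rw [LinearMap.mem_ker, LinearMap.comp_apply]
    show (commSub R).mkQ (BrL x y) = 0
    rw [BrL_apply, br_commSub_right s₀ t₀ M x hy, map_zero]
  let F : R → ((R ⧸ commSub R) →ₗ[ℂ] (R ⧸ commSub R)) :=
    fun x => (commSub R).liftQ ((commSub R).mkQ ∘ₗ BrL x) (key x)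
  have Fmk : ∀ (x y : R), F x (Submodule.Quotient.mk y)
      = Submodule.Quotient.mk (br s₀ t₀ M x y) := by
    intro x y
    show (commSub R).liftQ ((commSub R).mkQ ∘ₗ BrL x) (key x) (Submodule.Quotient.mk y) = _
    rw [Submodule.liftQ_apply, LinearMap.comp_apply, Submodule.mkQ_apply, BrL_apply]
  have Fker : ∀ x ∈ commSub R, F x = 0 := by
    intro x hx
    refine Submodule.linearMap_qext _ ?_
    ext y
    simp only [LinearMap.comp_apply, Submodule.mkQ_apply, LinearMap.zero_apply,
      LinearMap.zero_comp]
    rw [Fmk, br_commSub_left s₀ t₀ M hx]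
    exact Submodule.Quotient.mk_zero _
  let F' : R →ₗ[ℂ] ((R ⧸ commSub R) →ₗ[ℂ] (R ⧸ commSub R)) :=
    { toFun := F
      map_add' := by
        intro x x'
        refine Submodule.linearMap_qext _ ?_
        ext y
        simp only [LinearMap.comp_apply, Submodule.mkQ_apply, LinearMap.add_apply]
        rw [Fmk, Fmk, Fmk, br_add_left]
        exact Submodule.Quotient.mk_add _
      map_smul' := by
        intro a x
        refine Submodule.linearMap_qext _ ?_
        ext y
        simp only [LinearMap.comp_apply, Submodule.mkQ_apply, LinearMap.smul_apply,
          RingHom.id_apply]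
        rw [Fmk, Fmk, br_smul_left]
        exact Submodule.Quotient.mk_smul (commSub R) a _ }
  have F'ker : commSub R ≤ LinearMap.ker F' := by
    intro x hx
    rw [LinearMap.mem_ker]
    exact Fker x hx
  let br' : (R ⧸ commSub R) →ₗ[ℂ] (R ⧸ commSub R) →ₗ[ℂ] (R ⧸ commSub R) :=
    (commSub R).liftQ F' F'ker
  have main : ∀ u v : R, br' (Submodule.Quotient.mk u) (Submodule.Quotient.mk v)
      = Submodule.Quotient.mk (br s₀ t₀ M u v) := by
    intro u v
    have e : br' (Submodule.Quotient.mk u) = F u := by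
      show (commSub R).liftQ F' F'ker (Submodule.Quotient.mk u) = F u
      rw [Submodule.liftQ_apply]
      rfl
    rw [e, Fmk]
  refine ⟨br', ?_, ?_, ?_⟩
  · intro p q _ _
    exact main _ _
  · intro ξ η
    obtain ⟨u, rfl⟩ := Submodule.Quotient.mk_surjective _ ξ
    obtain ⟨v, rfl⟩ := Submodule.Quotient.mk_surjective _ η
    rw [main, main]
    refine eq_neg_of_add_eq_zero_left ?_
    rw [← Submodule.Quotient.mk_add]
    exact (Submodule.Quotient.mk_eq_zero _).2 (antisym_mem s₀ t₀ M u v)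
  · intro ξ η ζ
    obtain ⟨u, rfl⟩ := Submodule.Quotient.mk_surjective _ ξ
    obtain ⟨v, rfl⟩ := Submodule.Quotient.mk_surjective _ η
    obtain ⟨w, rfl⟩ := Submodule.Quotient.mk_surjective _ ζ
    rw [main u v, main v w, main w u, main (br s₀ t₀ M u v) w,
      main (br s₀ t₀ M v w) u, main (br s₀ t₀ M w u) v,
      ← Submodule.Quotient.mk_add, ← Submodule.Quotient.mk_add]
    exact (Submodule.Quotient.mk_eq_zero _).2 (jacobi_mem s₀ t₀ M u v w)

end Necklace
end
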